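/- arXiv:1403.7761 — 3 statements merged into one kernel-verified Lean document; each statement's English description precedes it below -/
import Mathlib

section
/- For the right-continuous random walk R_n = n - S_n started at 0, where S_n is a sum of i.i.d. ℕ-valued claims with law (p_k), the first hitting time τ_x = inf{n : R_n = x} of a positive integer level x satisfies Kendall's identity: P(τ_x = ω) = (x/ω) P(R_ω = x) = (x/ω) p^{*ω}_{ω - x} for every integer ω ≥ x, where p^{*ω} denotes the ω-fold convolution of (p_k). -/
open MeasureTheory ProbabilityTheory Filter
open scoped ENNReal

noncomputable section

variable {Ω : Type*} [MeasureSpace Ω]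

/-- Aggregate claims `S_n = Y_1 + ... + Y_n`. -/
def aggClaims (Y : ℕ → Ω → ℕ) (t : ℕ) (ω : Ω) : ℕ := ∑ i ∈ Finset.range t, Y i ω

/-- Right-continuous random walk `R_n = n - S_n` started at `0`. -/
def walk (Y : ℕ → Ω → ℕ) (n : ℕ) (ω : Ω) : ℤ := n - aggClaims Y n ω

/-- First hitting time of level `x` by the walk `R_n = n - S_n`. -/
def hitTime (Y : ℕ → Ω → ℕ) (x : ℤ) (ω : Ω) : ℕ∞ :=
  sInf ((fun n : ℕ => (n : ℕ∞)) '' {n : ℕ | 1 ≤ n ∧ walk Y n ω = x})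

open Finset
namespace KendallAux
attribute [local instance] Classical.propDecidable

variable (y : ℕ → ℕ)

/-- The walk `A n = n - (y 0 + ... + y (n-1))`. -/
def A (n : ℕ) : ℤ := n - ∑ i ∈ range n, (y i : ℤ)

/-- Running maximum of the walk. -/
def M : ℕ → ℤ
  | 0 => 0
  | n + 1 => max (M n) (A y (n + 1))

/-- `j` is a strict record time. -/
def record (j : ℕ) : Prop := ∀ m < j, A y m < A y j

lemma A_zero : A y 0 = 0 := by simp [A]

lemma A_step (n : ℕ) : A y (n + 1) = A y n + 1 - y n := by
  simp [A, Finset.sum_range_succ]; ring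

lemma A_step_le (n : ℕ) : A y (n + 1) ≤ A y n + 1 := by
  rw [A_step]; have : (0:ℤ) ≤ y n := Int.natCast_nonneg _; omega

variable {x w : ℕ} (hx : 1 ≤ x) (hxw : x ≤ w)
  (hper : ∀ n, y (n + w) = y n)
  (hsum : ∑ i ∈ range w, y i = w - x)

include hper hsum hxw in
lemma sum_shift (n : ℕ) : ∑ i ∈ range w, y (n + i) = w - x := by
  induction n with
  | zero => simpa using hsum
  | succ n ih =>
    have h1 : ∑ i ∈ range (w + 1), y (n + i)
        = (∑ i ∈ range w, y (n + (i + 1))) + y (n + 0) :=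
      Finset.sum_range_succ' (fun i => y (n + i)) w
    have h2 : ∑ i ∈ range (w + 1), y (n + i)
        = (∑ i ∈ range w, y (n + i)) + y (n + w) :=
      Finset.sum_range_succ (fun i => y (n + i)) w
    have h3 : ∑ i ∈ range w, y (n + 1 + i) = ∑ i ∈ range w, y (n + (i + 1)) :=
      Finset.sum_congr rfl (fun i _ => by rw [show n + 1 + i = n + (i + 1) by omega])
    rw [hper] at h2
    have hb : y (n + 0) = y n := rfl
    rw [h3]
    omega

include hper hsum hxw in
lemma A_per (n : ℕ) : A y (n + w) = A y n + x := by
  have h : ∑ i ∈ range (n + w), (y i : ℤ)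
      = (∑ i ∈ range n, (y i : ℤ)) + ∑ i ∈ range w, (y (n + i) : ℤ) := by
    rw [Finset.sum_range_add]
  have h2 : ∑ i ∈ range w, (y (n + i) : ℤ) = ((w - x : ℕ) : ℤ) := by
    rw [← Nat.cast_sum]
    exact_mod_cast congrArg (Nat.cast : ℕ → ℤ) (sum_shift y hxw hper hsum n)
  have h3 : ((w - x : ℕ) : ℤ) = (w : ℤ) - x := by omega
  simp only [A, h, h2, h3, Nat.cast_add]
  ring

lemma le_M : ∀ n, ∀ m ≤ n, A y m ≤ M y n := by
  intro n
  induction n with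
  | zero => intro m hm; interval_cases m; simp [A_zero, M]
  | succ n ih =>
    intro m hm
    rcases Nat.lt_or_ge m (n + 1) with h | h
    · exact le_trans (ih m (by omega)) (le_max_left _ _)
    · have : m = n + 1 := by omega
      subst this; exact le_max_right _ _

lemma M_mem (n : ℕ) : ∃ m ≤ n, M y n = A y m := by
  induction n with
  | zero => exact ⟨0, le_refl _, (A_zero y).symm⟩
  | succ n ih =>
    obtain ⟨m, hm, hM⟩ := ih
    rcases le_or_gt (A y (n + 1)) (M y n) with h | h
    · exact ⟨m, by omega, by rw [show M y (n+1) = max (M y n) (A y (n+1)) from rfl, max_eq_left h, hM]⟩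
    · exact ⟨n + 1, le_refl _, by rw [show M y (n+1) = max (M y n) (A y (n+1)) from rfl, max_eq_right h.le]⟩

lemma M_step (n : ℕ) :
    M y (n + 1) = M y n + (if record y (n + 1) then 1 else 0) := by
  by_cases h : record y (n + 1)
  · simp only [h, if_true]
    obtain ⟨m, hm, hM⟩ := M_mem y n
    have h1 : M y n < A y (n + 1) := hM ▸ h m (by omega)
    have h2 : A y (n + 1) ≤ A y n + 1 := A_step_le y n
    have h3 : A y n ≤ M y n := le_M y n n le_rfl
    have : M y (n + 1) = max (M y n) (A y (n + 1)) := rfl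
    omega
  · simp only [h, if_false, add_zero]
    have : ∃ m < n + 1, A y (n + 1) ≤ A y m := by
      by_contra hc
      push_neg at hc
      exact h fun m hm => hc m hm
    obtain ⟨m, hm, hle⟩ := this
    have : A y (n + 1) ≤ M y n := le_trans hle (le_M y n m (by omega))
    have h4 : M y (n + 1) = max (M y n) (A y (n + 1)) := rfl
    omega

lemma count_records (a n : ℕ) :
    (((Ioc a (a + n)).filter (fun j => record y j)).card : ℤ) = M y (a + n) - M y a := by
  classical
  induction n with
  | zero => simp
  | succ n ih =>
    have hIoc : Ioc a (a + (n + 1)) = insert (a + n + 1) (Ioc a (a + n)) := by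
      ext j
      simp only [Finset.mem_Ioc, Finset.mem_insert]
      omega
    have hnotmem : a + n + 1 ∉ Ioc a (a + n) := by simp
    rw [hIoc, Finset.filter_insert]
    have hM := M_step y (a + n)
    by_cases h : record y (a + n + 1)
    · rw [if_pos h, Finset.card_insert_of_notMem (fun hc => hnotmem (Finset.mem_of_mem_filter _ hc))]
      push_cast
      rw [show a + (n + 1) = a + n + 1 by omega] at *
      rw [if_pos h] at hM
      omega
    · rw [if_neg h]
      rw [show a + (n + 1) = a + n + 1 by omega] at *
      rw [if_neg h] at hM
      omega

include hper hsum hx hxw in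
lemma M_per (n : ℕ) (hn : w ≤ n + 1) : M y (n + w) = M y n + x := by
  have hub : M y (n + w) ≤ M y n + x := by
    obtain ⟨m, hm, hM⟩ := M_mem y (n + w)
    rcases le_or_gt w m with h | h
    · have : A y m = A y (m - w) + x := by
        have := A_per y hxw hper hsum (m - w)
        rw [show m - w + w = m by omega] at this
        omega
      have h2 : A y (m - w) ≤ M y n := le_M y n (m - w) (by omega)
      omega
    · have h2 : A y m ≤ M y n := le_M y n m (by omega)
      have : (0:ℤ) ≤ x := by positivity
      omega
  have hlb : M y n + x ≤ M y (n + w) := by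
    obtain ⟨m, hm, hM⟩ := M_mem y n
    have : A y (m + w) = A y m + x := A_per y hxw hper hsum m
    have h2 : A y (m + w) ≤ M y (n + w) := le_M y (n + w) (m + w) (by omega)
    omega
  omega

/-- A shift `k` is good: the shifted walk stays below `x` strictly before time `w`. -/
def good (k : ℕ) : Prop := ∀ n < w, A y (k + n) - A y k < (x : ℤ)

include hper hsum hx hxw in
lemma good_iff_record {k : ℕ} (hk : k < w) : good y (x := x) (w := w) k ↔ record y (k + w) := by
  have hAkw : A y (k + w) = A y k + x := A_per y hxw hper hsum k
  constructor
  · intro hg m hm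
    rcases le_or_gt m k with h | h
    · rcases Nat.eq_or_lt_of_le h with rfl | h'
      · omega
      · -- m < k : A m = A (m + w) - x, and k < m + w < k + w
        have h1 : A y (m + w) = A y m + x := A_per y hxw hper hsum m
        have h2 : A y (k + (m + w - k)) - A y k < x := by
          apply hg; omega
        rw [show k + (m + w - k) = m + w by omega] at h2
        omega
    · have h2 : A y (k + (m - k)) - A y k < x := by apply hg; omega
      rw [show k + (m - k) = m by omega] at h2
      omega
  · intro hr n hn
    rcases Nat.eq_zero_or_pos n with rfl | hn0
    · simp; omega
    · have := hr (k + n) (by omega)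
      omega

include hper hsum hx hxw in
lemma card_good : ((range w).filter (fun k => good y (x := x) (w := w) k)).card = x := by
  classical
  have hrec : (((Ioc (w - 1) ((w - 1) + w)).filter (fun j => record y j)).card : ℤ)
      = M y ((w - 1) + w) - M y (w - 1) := count_records y (w - 1) w
  have hMp : M y ((w - 1) + w) = M y (w - 1) + x := M_per y hx hxw hper hsum (w - 1) (by omega)
  have hcard : (((Ioc (w - 1) ((w - 1) + w)).filter (fun j => record y j)).card : ℤ) = x := by
    omega
  have hbij : ((range w).filter (fun k => good y (x := x) (w := w) k)).card
      = ((Ioc (w - 1) ((w - 1) + w)).filter (fun j => record y j)).card := by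
    apply Finset.card_nbij' (i := fun k => k + w) (j := fun j => j - w)
    · intro k hk
      simp only [Finset.mem_coe, Finset.mem_filter, Finset.mem_range] at hk
      simp only [Finset.mem_coe, Finset.mem_filter, Finset.mem_Ioc]
      exact ⟨⟨by omega, by omega⟩, (good_iff_record y hx hxw hper hsum hk.1).mp hk.2⟩
    · intro j hj
      simp only [Finset.mem_coe, Finset.mem_filter, Finset.mem_Ioc] at hj
      simp only [Finset.mem_coe, Finset.mem_filter, Finset.mem_range]
      have hjw : j - w < w := by omega
      refine ⟨by omega, (good_iff_record y hx hxw hper hsum hjw).mpr ?_⟩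
      rw [show j - w + w = j by omega]
      exact hj.2
    · intro k hk; dsimp only; omega
    · intro j hj
      simp only [Finset.mem_coe, Finset.mem_filter, Finset.mem_Ioc] at hj
      dsimp only
      omega
  omega



section
open Fin.NatCast
variable {w x : ℕ} [NeZero w]

/-- Periodic extension of a `Fin w`-indexed sequence. -/
def extf (v : Fin w → ℕ) : ℕ → ℕ := fun n => v n

/-- Cyclic rotation by `k`. -/
def rot (k : ℕ) (v : Fin w → ℕ) : Fin w → ℕ := fun i => v ((k : Fin w) + i)

lemma extf_val (v : Fin w → ℕ) (i : Fin w) : extf v i.val = v i := by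
  simp [extf, Fin.cast_val_eq_self]

lemma extf_lt (v : Fin w → ℕ) {n : ℕ} (hn : n < w) : extf v n = v ⟨n, hn⟩ := by
  simp only [extf]
  congr 1
  exact Fin.ext (Fin.val_cast_of_lt hn)

lemma extf_per (v : Fin w → ℕ) (n : ℕ) : extf v (n + w) = extf v n := by
  simp [extf, Nat.cast_add, Fin.natCast_self]

lemma extf_rot (k : ℕ) (v : Fin w → ℕ) (n : ℕ) : extf (rot k v) n = extf v (k + n) := by
  simp [extf, rot, Nat.cast_add]

lemma rot_rot (k m : ℕ) (v : Fin w → ℕ) : rot k (rot m v) = rot (m + k) v := by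
  funext i
  simp [rot, Nat.cast_add]
  ac_rfl

lemma rot_w (v : Fin w → ℕ) : rot w v = v := by
  funext i
  simp [rot, Fin.natCast_self]

lemma rot_left_inv {k : ℕ} (hk : k ≤ w) (v : Fin w → ℕ) : rot (w - k) (rot k v) = v := by
  rw [rot_rot, show k + (w - k) = w by omega, rot_w]

lemma rot_right_inv {k : ℕ} (hk : k ≤ w) (v : Fin w → ℕ) : rot k (rot (w - k) v) = v := by
  rw [rot_rot, show w - k + k = w by omega, rot_w]

lemma sum_rot (k : ℕ) (v : Fin w → ℕ) : ∑ i, rot k v i = ∑ i, v i :=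
  Equiv.sum_comp (Equiv.addLeft (k : Fin w)) v

lemma prod_rot {M : Type*} [CommMonoid M] (f : ℕ → M) (k : ℕ) (v : Fin w → ℕ) :
    ∏ i, f (rot k v i) = ∏ i, f (v i) :=
  Equiv.prod_comp (Equiv.addLeft (k : Fin w)) (fun j => f (v j))

lemma sum_range_extf (v : Fin w → ℕ) : ∑ i ∈ range w, extf v i = ∑ i, v i := by
  rw [← Fin.sum_univ_eq_sum_range (extf v) w]
  exact Finset.sum_congr rfl fun i _ => extf_val v i

/-- The sum condition `S_w = w - x`. -/
def sumOK (x : ℕ) (v : Fin w → ℕ) : Prop := ∑ i, v i = w - x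

/-- The "first passage at time w" condition. -/
def goodV (x : ℕ) (v : Fin w → ℕ) : Prop :=
  sumOK x v ∧ ∀ n < w, A (extf v) n < (x : ℤ)

lemma A_shift (y : ℕ → ℕ) (k n : ℕ) :
    A y (k + n) - A y k = (n : ℤ) - ∑ i ∈ range n, (y (k + i) : ℤ) := by
  simp only [A, Finset.sum_range_add]
  push_cast
  ring

lemma sumOK_rot {k : ℕ} {v : Fin w → ℕ} : sumOK x (rot k v) ↔ sumOK x v := by
  unfold sumOK; rw [sum_rot]

lemma goodV_rot_iff (hxw : x ≤ w) {v : Fin w → ℕ} (hs : sumOK x v) (k : ℕ) :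
    goodV x (rot k v) ↔ good (extf v) (x := x) (w := w) k := by
  unfold goodV good
  rw [sumOK_rot]
  simp only [hs, true_and]
  apply forall_congr'; intro n
  apply imp_congr_right; intro hn
  have h1 : A (extf (rot k v)) n = A (extf v) (k + n) - A (extf v) k := by
    rw [A_shift]
    simp only [A]
    congr 1
    exact Finset.sum_congr rfl fun i _ => by rw [extf_rot]
  rw [h1]

lemma card_good_rot (hx : 1 ≤ x) (hxw : x ≤ w) {v : Fin w → ℕ} (hs : sumOK x v) :
    ((range w).filter (fun k => goodV x (rot k v))).card = x := by
  have hsum : ∑ i ∈ range w, extf v i = w - x := by rw [sum_range_extf]; exact hs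
  have heq : (range w).filter (fun k => goodV x (rot k v))
      = (range w).filter (fun k => good (extf v) (x := x) (w := w) k) :=
    Finset.filter_congr (fun k _ => goodV_rot_iff hxw hs k)
  rw [heq]
  exact card_good (extf v) hx hxw (extf_per v) hsum

/-- If the walk never *equals* `x` before `w`, it stays strictly below (steps are `≤ 1`). -/
lemma lt_of_ne (y : ℕ → ℕ) (hx : 1 ≤ x)
    (h : ∀ n, 1 ≤ n → n < w → A y n ≠ (x : ℤ)) :
    ∀ n < w, A y n < (x : ℤ) := by
  intro n
  induction n with
  | zero => intro _; rw [A_zero]; exact_mod_cast hx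
  | succ n ih =>
    intro hn
    have h1 : A y n < x := ih (by omega)
    have h2 : A y (n + 1) ≤ A y n + 1 := A_step_le y n
    have h3 : A y (n + 1) ≠ x := h (n + 1) (by omega) hn
    omega

end

lemma key_count {w x : ℕ} [NeZero w] (hx : 1 ≤ x) (hxw : x ≤ w) (p : ℕ → ℝ≥0∞) :
    (x : ℝ≥0∞) * ∑ v ∈ (Fintype.piFinset fun _ : Fin w => range (w+1)).filter (sumOK x),
        ∏ i, p (v i)
      = (w : ℝ≥0∞) * ∑ v ∈ (Fintype.piFinset fun _ : Fin w => range (w+1)).filter (goodV x),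
        ∏ i, p (v i) := by
  classical
  set F := (Fintype.piFinset fun _ : Fin w => range (w+1)) with hF
  have hrotF : ∀ (k : ℕ) (v : Fin w → ℕ), v ∈ F → rot k v ∈ F := by
    intro k v hv
    rw [Fintype.mem_piFinset] at hv ⊢
    intro i
    exact hv _
  have hrot : ∀ k ∈ range w,
      ∑ v ∈ (F.filter (sumOK x)).filter (fun v => goodV x (rot k v)), ∏ i, p (v i)
        = ∑ v ∈ F.filter (goodV x), ∏ i, p (v i) := by
    intro k hk
    rw [Finset.mem_range] at hk
    apply Finset.sum_nbij' (i := rot k) (j := rot (w - k))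
    · intro v hv
      simp only [Finset.mem_filter] at hv ⊢
      exact ⟨hrotF _ _ hv.1.1, hv.2⟩
    · intro v hv
      simp only [Finset.mem_filter] at hv ⊢
      refine ⟨⟨hrotF _ _ hv.1, sumOK_rot.mpr hv.2.1⟩, ?_⟩
      rw [rot_right_inv (le_of_lt hk)]
      exact hv.2
    · intro v _; exact rot_left_inv (le_of_lt hk) v
    · intro v _; exact rot_right_inv (le_of_lt hk) v
    · intro v _; exact (prod_rot p k v).symm
  calc (x : ℝ≥0∞) * ∑ v ∈ F.filter (sumOK x), ∏ i, p (v i)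
      = ∑ v ∈ F.filter (sumOK x), (x : ℝ≥0∞) * ∏ i, p (v i) := Finset.mul_sum _ _ _
    _ = ∑ v ∈ F.filter (sumOK x),
          ∑ k ∈ range w, if goodV x (rot k v) then ∏ i, p (v i) else 0 := by
        apply Finset.sum_congr rfl
        intro v hv
        have hs : sumOK x v := (Finset.mem_filter.mp hv).2
        rw [← Finset.sum_filter, Finset.sum_const, card_good_rot hx hxw hs,
          nsmul_eq_mul]
    _ = ∑ k ∈ range w,
          ∑ v ∈ F.filter (sumOK x), if goodV x (rot k v) then ∏ i, p (v i) else 0 :=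
        Finset.sum_comm
    _ = ∑ k ∈ range w,
          ∑ v ∈ (F.filter (sumOK x)).filter (fun v => goodV x (rot k v)), ∏ i, p (v i) := by
        apply Finset.sum_congr rfl
        intro k _
        exact (Finset.sum_filter _ _).symm
    _ = ∑ _k ∈ range w, ∑ v ∈ F.filter (goodV x), ∏ i, p (v i) :=
        Finset.sum_congr rfl hrot
    _ = (w : ℝ≥0∞) * ∑ v ∈ F.filter (goodV x), ∏ i, p (v i) := by
        rw [Finset.sum_const, Finset.card_range, nsmul_eq_mul]


end KendallAux
section Glue

open Finset
open scoped ENNReal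

variable {Ω : Type*} [MeasureSpace Ω]

lemma hitTime_eq_iff (Y : ℕ → Ω → ℕ) (x : ℤ) {w : ℕ} (hw1 : 1 ≤ w) (ω : Ω) :
    hitTime Y x ω = (w : ℕ∞) ↔
      (walk Y w ω = x ∧ ∀ n, 1 ≤ n → n < w → walk Y n ω ≠ x) := by
  constructor
  · intro h
    have hne : {n : ℕ | 1 ≤ n ∧ walk Y n ω = x}.Nonempty := by
      by_contra hc
      rw [Set.not_nonempty_iff_eq_empty] at hc
      rw [hitTime, hc] at h
      simp at h
    set m := sInf {n : ℕ | 1 ≤ n ∧ walk Y n ω = x} with hm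
    have hmem : m ∈ {n : ℕ | 1 ≤ n ∧ walk Y n ω = x} := Nat.sInf_mem hne
    have heq : hitTime Y x ω = (m : ℕ∞) := by
      apply le_antisymm
      · exact sInf_le ⟨m, hmem, rfl⟩
      · apply le_sInf
        rintro b ⟨n, hn, rfl⟩
        show (m : ℕ∞) ≤ (n : ℕ∞)
        exact Nat.cast_le.mpr (Nat.sInf_le hn)
    rw [h] at heq
    have hwm : w = m := by exact_mod_cast heq
    refine ⟨by rw [hwm]; exact hmem.2, ?_⟩
    intro n hn1 hnw hnx
    have : m ≤ n := Nat.sInf_le ⟨hn1, hnx⟩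
    omega
  · rintro ⟨hww, hmin⟩
    apply le_antisymm
    · exact sInf_le ⟨w, ⟨hw1, hww⟩, rfl⟩
    · apply le_sInf
      rintro b ⟨n, ⟨hn1, hnx⟩, rfl⟩
      have : w ≤ n := by
        by_contra hc
        push_neg at hc
        exact hmin n hn1 hc hnx
      show (w : ℕ∞) ≤ (n : ℕ∞)
      exact Nat.cast_le.mpr this

variable [IsProbabilityMeasure (ℙ : Measure Ω)]

lemma meas_cell {w : ℕ} [NeZero w] (Y : ℕ → Ω → ℕ) (hY : ∀ i, Measurable (Y i))
    (hindep : iIndepFun Y ℙ)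
    (hid : ∀ i, IdentDistrib (Y i) (Y 0) ℙ ℙ) (v : Fin w → ℕ) :
    ℙ {ω | ∀ i : Fin w, Y i ω = v i} = ∏ i : Fin w, ℙ {ω | Y 0 ω = v i} := by
  classical
  have hset : {ω | ∀ i : Fin w, Y i ω = v i}
      = ⋂ n ∈ Finset.range w, Y n ⁻¹' {KendallAux.extf v n} := by
    ext ω
    simp only [Set.mem_setOf_eq, Set.mem_iInter, Set.mem_preimage, Set.mem_singleton_iff,
      Finset.mem_range]
    constructor
    · intro h n hn
      rw [KendallAux.extf_lt v hn]
      exact h ⟨n, hn⟩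
    · intro h i
      have := h i.val i.isLt
      rwa [KendallAux.extf_val, show ((i.val : ℕ) : ℕ) = (i : ℕ) from rfl] at this
  have hprod := hindep.measure_inter_preimage_eq_mul (range w)
    (sets := fun n => {KendallAux.extf v n}) (fun n _ => measurableSet_singleton _)
  rw [hset, hprod]
  have hone : ∀ n : ℕ, ℙ (Y n ⁻¹' {KendallAux.extf v n}) = ℙ {ω | Y 0 ω = KendallAux.extf v n} := by
    intro n
    have := (hid n).measure_mem_eq (measurableSet_singleton (KendallAux.extf v n))
    rw [this]
    rfl
  rw [Finset.prod_congr rfl (fun n _ => hone n)]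
  rw [← Fin.prod_univ_eq_prod_range (fun n => ℙ {ω | Y 0 ω = KendallAux.extf v n}) w]
  exact Finset.prod_congr rfl fun i _ => by rw [KendallAux.extf_val]

lemma prob_event {w : ℕ} [NeZero w] (Y : ℕ → Ω → ℕ) (hY : ∀ i, Measurable (Y i))
    (hindep : iIndepFun Y ℙ)
    (hid : ∀ i, IdentDistrib (Y i) (Y 0) ℙ ℙ)
    (Q : (Fin w → ℕ) → Prop) [DecidablePred Q]
    (hQ : ∀ v, Q v → ∀ i, v i < w + 1) :
    ℙ {ω | Q (fun i : Fin w => Y i ω)}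
      = ∑ v ∈ (Fintype.piFinset fun _ : Fin w => range (w+1)).filter Q,
          ∏ i : Fin w, ℙ {ω | Y 0 ω = v i} := by
  classical
  set F := (Fintype.piFinset fun _ : Fin w => range (w+1)) with hF
  have hE : {ω | Q (fun i : Fin w => Y i ω)}
      = ⋃ v ∈ F.filter Q, {ω | ∀ i : Fin w, Y i ω = v i} := by
    ext ω
    simp only [Set.mem_setOf_eq, Set.mem_iUnion, exists_prop]
    constructor
    · intro h
      refine ⟨fun i => Y i ω, ?_, fun i => rfl⟩
      rw [Finset.mem_filter, hF, Fintype.mem_piFinset]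
      exact ⟨fun i => Finset.mem_range.mpr (hQ _ h i), h⟩
    · rintro ⟨v, hv, hcell⟩
      have : (fun i : Fin w => Y i ω) = v := funext hcell
      rw [this]
      exact (Finset.mem_filter.mp hv).2
  have hmeas : ∀ v : Fin w → ℕ, MeasurableSet {ω | ∀ i : Fin w, Y i ω = v i} := by
    intro v
    have : {ω | ∀ i : Fin w, Y i ω = v i} = ⋂ i : Fin w, Y i ⁻¹' {v i} := by
      ext ω; simp [Set.mem_iInter]
    rw [this]
    exact MeasurableSet.iInter fun i => (hY i) (measurableSet_singleton _)
  have hdisj : Set.PairwiseDisjoint ↑(F.filter Q)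
      (fun v : Fin w → ℕ => {ω | ∀ i : Fin w, Y i ω = v i}) := by
    intro u _ v _ huv
    apply Set.disjoint_left.mpr
    intro ω hu hv
    exact huv (funext fun i => (hu i).symm.trans (hv i))
  rw [hE, measure_biUnion_finset hdisj (fun v _ => hmeas v)]
  exact Finset.sum_congr rfl fun v _ => meas_cell Y hY hindep hid v

end Glue

open Finset in
/-- Kendall's identity: `P(τ_x = ω) = (x/ω) P(R_ω = x) = (x/ω) p^{*ω}_{ω-x}`. -/
theorem kendall_identity
    [IsProbabilityMeasure (ℙ : Measure Ω)]
    (Y : ℕ → Ω → ℕ) (hY : ∀ i, Measurable (Y i))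
    (hindep : iIndepFun Y ℙ)
    (hid : ∀ i, IdentDistrib (Y i) (Y 0) ℙ ℙ)
    (x : ℕ) (hx : 1 ≤ x) (w : ℕ) (hw : x ≤ w) :
    ℙ {ω | hitTime Y (x : ℤ) ω = (w : ℕ∞)} =
      ((x : ℝ≥0∞) / w) * ℙ {ω | walk Y w ω = (x : ℤ)} ∧
    ℙ {ω | hitTime Y (x : ℤ) ω = (w : ℕ∞)} =
      ((x : ℝ≥0∞) / w) * ℙ {ω | aggClaims Y w ω = w - x} := by
  classical
  have hw0 : 0 < w := lt_of_lt_of_le hx hw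
  haveI : NeZero w := ⟨by omega⟩
  have hEw : {ω : Ω | walk Y w ω = (x : ℤ)} = {ω : Ω | aggClaims Y w ω = w - x} := by
    ext ω
    simp only [Set.mem_setOf_eq, walk]
    omega
  have hwalkA : ∀ ω : Ω, ∀ n ≤ w,
      walk Y n ω = KendallAux.A (KendallAux.extf (fun i : Fin w => Y i ω)) n := by
    intro ω n hn
    simp only [walk, aggClaims, KendallAux.A]
    congr 1
    rw [Nat.cast_sum]
    apply Finset.sum_congr rfl
    intro i hi
    rw [Finset.mem_range] at hi
    rw [KendallAux.extf_lt _ (lt_of_lt_of_le hi hn)]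
  have hsum_cast : ∀ ω : Ω,
      (∑ i ∈ range w, KendallAux.extf (fun i : Fin w => Y i ω) i)
        = ∑ i : Fin w, Y i ω :=
    fun ω => KendallAux.sum_range_extf (fun i : Fin w => Y i ω)
  have hEh : {ω : Ω | hitTime Y (x : ℤ) ω = (w : ℕ∞)}
      = {ω : Ω | KendallAux.goodV x (fun i : Fin w => Y i ω)} := by
    ext ω
    rw [Set.mem_setOf_eq, Set.mem_setOf_eq, hitTime_eq_iff Y _ (by omega) ω]
    have hA := hwalkA ω
    have hAwdef : KendallAux.A (KendallAux.extf (fun i : Fin w => Y i ω)) w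
        = (w : ℤ) - ((∑ i : Fin w, Y i ω : ℕ) : ℤ) := by
      simp only [KendallAux.A]
      rw [← Nat.cast_sum, hsum_cast ω]
    constructor
    · rintro ⟨hww, hmin⟩
      have hAw : KendallAux.A (KendallAux.extf (fun i : Fin w => Y i ω)) w = (x : ℤ) := by
        rw [← hA w le_rfl]; exact hww
      have hsum : KendallAux.sumOK x (fun i : Fin w => Y i ω) := by
        have h2 : (w : ℤ) - ((∑ i : Fin w, Y i ω : ℕ) : ℤ) = (x : ℤ) := by
          rw [← hAwdef]; exact hAw
        show (∑ i : Fin w, Y i ω) = w - x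
        omega
      refine ⟨hsum, ?_⟩
      apply KendallAux.lt_of_ne (w := w) _ hx
      intro n hn1 hnw
      rw [← hA n (le_of_lt hnw)]
      exact hmin n hn1 hnw
    · rintro ⟨hsum, hlt⟩
      have hsum' : (∑ i : Fin w, Y i ω) = w - x := hsum
      have hAw : KendallAux.A (KendallAux.extf (fun i : Fin w => Y i ω)) w = (x : ℤ) := by
        rw [hAwdef]
        omega
      refine ⟨by rw [hA w le_rfl]; exact hAw, ?_⟩
      intro n hn1 hnw hne
      rw [hA n (le_of_lt hnw)] at hne
      have := hlt n hnw
      omega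
  have hbound_s : ∀ v : Fin w → ℕ, KendallAux.sumOK x v → ∀ i, v i < w + 1 := by
    intro v hs i
    have h1 : v i ≤ ∑ j, v j :=
      Finset.single_le_sum (fun j _ => Nat.zero_le _) (Finset.mem_univ i)
    unfold KendallAux.sumOK at hs
    omega
  have hbound_g : ∀ v : Fin w → ℕ, KendallAux.goodV x v → ∀ i, v i < w + 1 :=
    fun v hg => hbound_s v hg.1
  have hPs := prob_event Y hY hindep hid (KendallAux.sumOK x) hbound_s
  have hPg := prob_event Y hY hindep hid (KendallAux.goodV x) hbound_g
  have hEs : {ω : Ω | aggClaims Y w ω = w - x}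
      = {ω : Ω | KendallAux.sumOK x (fun i : Fin w => Y i ω)} := by
    ext ω
    simp only [Set.mem_setOf_eq, aggClaims, KendallAux.sumOK]
    rw [← Fin.sum_univ_eq_sum_range (fun i => Y i ω) w]
  have hkey := KendallAux.key_count (w := w) hx hw (fun a => ℙ {ω | Y 0 ω = a})
  have hPs' : ℙ {ω : Ω | aggClaims Y w ω = w - x}
      = ∑ v ∈ (Fintype.piFinset fun _ : Fin w => range (w+1)).filter (KendallAux.sumOK x),
          ∏ i : Fin w, ℙ {ω | Y 0 ω = v i} := by
    rw [hEs]; exact hPs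
  have hPg' : ℙ {ω : Ω | hitTime Y (x : ℤ) ω = (w : ℕ∞)}
      = ∑ v ∈ (Fintype.piFinset fun _ : Fin w => range (w+1)).filter (KendallAux.goodV x),
          ∏ i : Fin w, ℙ {ω | Y 0 ω = v i} := by
    rw [hEh]; exact hPg
  have hwne : (w : ℝ≥0∞) ≠ 0 := by
    simp only [ne_eq, Nat.cast_eq_zero]; omega
  have hwtop : (w : ℝ≥0∞) ≠ ⊤ := ENNReal.natCast_ne_top w
  have hmain : ℙ {ω : Ω | hitTime Y (x : ℤ) ω = (w : ℕ∞)}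
      = ((x : ℝ≥0∞) / w) * ℙ {ω : Ω | aggClaims Y w ω = w - x} := by
    rw [hPg', hPs']
    have hdiv : (∑ v ∈ (Fintype.piFinset fun _ : Fin w => range (w+1)).filter (KendallAux.goodV x),
          ∏ i : Fin w, ℙ {ω | Y 0 ω = v i})
        = ((x : ℝ≥0∞) * ∑ v ∈ (Fintype.piFinset fun _ : Fin w => range (w+1)).filter
              (KendallAux.sumOK x), ∏ i : Fin w, ℙ {ω | Y 0 ω = v i}) / w :=
      (ENNReal.eq_div_iff hwne hwtop).mpr hkey.symm
    rw [hdiv, div_eq_mul_inv, div_eq_mul_inv, mul_right_comm]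
  exact ⟨by rw [hEw]; exact hmain, hmain⟩

end
end

section
/- (Seal-type formula) For the discrete-time risk process with i.i.d. ℕ-valued claims of law (p_k), initial capital u ≥ 1 and t ≥ 1, the survival probability satisfies P_u(T_0 ≥ t+1) = Σ_{j=0}^{u+t-1} p^{*t}_j − Σ_{j=u+1}^{u+t-1} p^{*(j-u)}_j ( Σ_{n=j}^{u+t-1} ((t+u−n)/(t+u−j)) p^{*(t+u−j)}_{n−j} ). -/
open MeasureTheory ProbabilityTheory Filter
open scoped ENNReal

noncomputable section

variable {Ω : Type*} [MeasureSpace Ω]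

/-- Risk process `R_t = u + t - S_t`. -/
def riskProc (Y : ℕ → Ω → ℕ) (u : ℤ) (t : ℕ) (ω : Ω) : ℤ := u + t - aggClaims Y t ω

/-- Classical ruin time `T_0 = inf {t ≥ 1 : R_t ≤ 0}`. -/
def ruinTime (Y : ℕ → Ω → ℕ) (u : ℤ) (ω : Ω) : ℕ∞ :=
  sInf ((fun t : ℕ => (t : ℕ∞)) '' {t : ℕ | 1 ≤ t ∧ riskProc Y u t ω ≤ 0})

/-- The `m`-fold convolution `p^{*m}_j = P(Y_1 + ... + Y_m = j)` (as a real number). -/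
def conv (Y : ℕ → Ω → ℕ) (m j : ℕ) : ℝ := (ℙ {ω | aggClaims Y m ω = j}).toReal

section SealAuxSection
open Finset
namespace SealAux

def ps {m : ℕ} (y : Fin m → ℕ) (s : ℕ) : ℕ := ∑ i : Fin m, if (i : ℕ) < s then y i else 0

def box (m N : ℕ) : Finset (Fin m → ℕ) := Fintype.piFinset (fun _ => Finset.range (N+1))

def seqs (m j : ℕ) : Finset (Fin m → ℕ) := (box m j).filter (fun y => ∑ i, y i = j)

lemma ps_self {m : ℕ} (y : Fin m → ℕ) : ps y m = ∑ i, y i := by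
  unfold ps; exact Finset.sum_congr rfl (fun i _ => by simp [i.isLt])

lemma ps_succ {m : ℕ} (y : Fin m → ℕ) (s : ℕ) (hs : s < m) :
    ps y (s+1) = ps y s + y ⟨s, hs⟩ := by
  unfold ps
  have h : ∀ i : Fin m, (if (i:ℕ) < s+1 then y i else 0)
      = (if (i:ℕ) < s then y i else 0) + (if i = ⟨s, hs⟩ then y i else 0) := by
    intro i
    by_cases h1 : (i:ℕ) < s
    · simp [h1, Nat.lt_succ_of_lt h1, show i ≠ ⟨s,hs⟩ by simp [Fin.ext_iff]; omega]
    · by_cases h2 : (i:ℕ) = s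
      · simp [h2, show i = ⟨s,hs⟩ by simp [Fin.ext_iff, h2]]
      · simp [h1, h2, show ¬ ((i:ℕ) < s + 1) by omega, show i ≠ ⟨s,hs⟩ by simp [Fin.ext_iff]; omega]
  rw [Finset.sum_congr rfl (fun i _ => h i), Finset.sum_add_distrib,
    Finset.sum_ite_eq' Finset.univ (⟨s,hs⟩ : Fin m) y]
  simp

lemma ps_mono {m : ℕ} (y : Fin m → ℕ) {s s' : ℕ} (h : s ≤ s') : ps y s ≤ ps y s' := by
  unfold ps; apply Finset.sum_le_sum; intro i _
  by_cases hi : (i:ℕ) < s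
  · simp [hi, lt_of_lt_of_le hi h]
  · simp [hi]

lemma mem_seqs {m j : ℕ} {y : Fin m → ℕ} : y ∈ seqs m j ↔ ∑ i, y i = j := by
  constructor
  · intro h; exact (Finset.mem_filter.1 h).2
  · intro h
    refine Finset.mem_filter.2 ⟨Fintype.mem_piFinset.2 (fun i => ?_), h⟩
    rw [Finset.mem_range]
    have : y i ≤ ∑ i, y i := Finset.single_le_sum (f := y) (fun _ _ => Nat.zero_le _) (Finset.mem_univ i)
    omega

instance psGoodDec (m : ℕ) : DecidablePred (fun y : Fin m → ℕ => ∀ r ∈ Finset.Icc 1 m, ps y r < r) :=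
  fun _ => Finset.decidableDforallFinset

def wrap (m : ℕ) (y : Fin m → ℕ) (n : ℕ) : ℕ :=
  if h : n % m < m then y ⟨n % m, h⟩ else 0

def SS (m : ℕ) (y : Fin m → ℕ) (n : ℕ) : ℤ :=
  ∑ i ∈ Finset.range n, ((wrap m y i : ℤ) - 1)

section cyc
variable {m k : ℕ} {y : Fin m → ℕ}

lemma SS_succ (n : ℕ) : SS m y (n+1) = SS m y n + (wrap m y n : ℤ) - 1 := by
  unfold SS; rw [Finset.sum_range_succ]; ring

lemma wrap_add_m (n : ℕ) : wrap m y (n + m) = wrap m y n := by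
  unfold wrap; simp [Nat.add_mod_right]

lemma SS_step (n : ℕ) : SS m y n - 1 ≤ SS m y (n+1) := by
  rw [SS_succ]; have : (0:ℤ) ≤ (wrap m y n : ℤ) := Int.natCast_nonneg _
  omega

lemma wrap_eq (hm : 0 < m) (n : ℕ) : wrap m y n = y ⟨n % m, Nat.mod_lt n hm⟩ := by
  unfold wrap; rw [dif_pos (Nat.mod_lt n hm)]

lemma SS_m (hm : 0 < m) (hk : ∑ i, y i = k) : SS m y m = (k : ℤ) - m := by
  unfold SS
  have h2 : ∑ i ∈ Finset.range m, ((wrap m y i : ℤ) - 1) = ∑ i : Fin m, ((y i : ℤ) - 1) := by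
    apply Finset.sum_nbij' (fun i => (⟨i % m, Nat.mod_lt i hm⟩ : Fin m)) (fun i => (i : ℕ))
    · intros; exact Finset.mem_univ _
    · intro i _; exact Finset.mem_range.2 i.isLt
    · intro i hi; simp [Nat.mod_eq_of_lt (Finset.mem_range.1 hi)]
    · intro i _; ext; simp [Nat.mod_eq_of_lt i.isLt]
    · intro i hi; rw [wrap_eq hm]
  rw [h2, Finset.sum_sub_distrib]
  rw [← Nat.cast_sum]; simp [hk]

lemma SS_add_m (hm : 0 < m) (hk : ∑ i, y i = k) (hkm : k < m) (n : ℕ) :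
    SS m y (n + m) = SS m y n - (m - k : ℕ) := by
  induction n with
  | zero =>
    have h0 : SS m y 0 = 0 := by simp [SS]
    rw [Nat.zero_add, SS_m hm hk, h0, Nat.cast_sub hkm.le]; ring
  | succ n ih =>
    have h : n + 1 + m = (n + m) + 1 := by ring
    rw [h, SS_succ, ih, wrap_add_m, SS_succ]
    ring

def Mx (m : ℕ) (y : Fin m → ℕ) : ℤ :=
  ((Finset.range (m+1)).image (SS m y)).max' (Finset.Nonempty.image ⟨0, Finset.mem_range.2 (Nat.succ_pos m)⟩ _)

lemma SS_le_Mx_of_le {n : ℕ} (hn : n ≤ m) : SS m y n ≤ Mx m y := by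
  apply Finset.le_max'
  exact Finset.mem_image.2 ⟨n, Finset.mem_range.2 (by omega), rfl⟩

lemma exists_Mx : ∃ n₀, n₀ ≤ m ∧ SS m y n₀ = Mx m y := by
  have := Finset.max'_mem ((Finset.range (m+1)).image (SS m y))
    (Finset.Nonempty.image ⟨0, Finset.mem_range.2 (Nat.succ_pos m)⟩ _)
  obtain ⟨n, hn, h⟩ := Finset.mem_image.1 this
  exact ⟨n, Nat.lt_succ_iff.1 (Finset.mem_range.1 hn), h⟩

variable (hm : 0 < m) (hk : ∑ i, y i = k) (hkm : k < m)
include hm hk hkm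

lemma SS_le_Mx : ∀ n, SS m y n ≤ Mx m y := by
  intro n
  induction n using Nat.strong_induction_on with
  | _ n ih =>
    by_cases h : n ≤ m
    · exact SS_le_Mx_of_le (by omega)
    · have h1 : n = (n - m) + m := by omega
      rw [h1, SS_add_m hm hk hkm]
      have := ih (n - m) (by omega)
      have : (0:ℤ) ≤ ((m - k : ℕ) : ℤ) := Int.natCast_nonneg _
      omega

lemma SS_qm (q r : ℕ) : SS m y (q * m + r) = SS m y r - q * ((m - k : ℕ) : ℤ) := by
  induction q with
  | zero => simp
  | succ q ih =>
    have h1 : (q+1) * m + r = (q * m + r) + m := by ring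
    rw [h1, SS_add_m hm hk hkm, ih]
    push_cast
    ring

def Bnd (m : ℕ) (y : Fin m → ℕ) (v : ℤ) : ℕ := ((Mx m y - v).toNat + 1) * m

lemma lt_Bnd {v : ℤ} {n : ℕ} (hv : v ≤ SS m y n) : n < Bnd m y v := by
  have hd : (1:ℤ) ≤ ((m - k : ℕ) : ℤ) := by
    have : 1 ≤ m - k := by omega
    exact_mod_cast this
  have h6 : (n / m) * m + n % m = n := by rw [Nat.mul_comm]; exact Nat.div_add_mod n m
  have h1 : SS m y n = SS m y (n % m) - ((n / m : ℕ) : ℤ) * ((m - k : ℕ) : ℤ) := by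
    conv_lhs => rw [← h6]
    exact SS_qm hm hk hkm _ _
  have h2 : SS m y (n % m) ≤ Mx m y := SS_le_Mx_of_le (le_of_lt (Nat.mod_lt n hm))
  have h3 : ((n / m : ℕ) : ℤ) ≤ ((n / m : ℕ) : ℤ) * ((m - k : ℕ) : ℤ) := by
    nlinarith [Int.natCast_nonneg (n / m)]
  have h4 : ((n / m : ℕ) : ℤ) ≤ Mx m y - v := by omega
  have h5 : n / m ≤ (Mx m y - v).toNat := by
    rw [Int.le_toNat (by linarith [Int.natCast_nonneg (n / m)])]; exact h4
  have h7 : n % m < m := Nat.mod_lt n hm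
  calc n = (n / m) * m + n % m := h6.symm
    _ < (n / m) * m + m := by omega
    _ = (n / m + 1) * m := by ring
    _ ≤ ((Mx m y - v).toNat + 1) * m := Nat.mul_le_mul (by omega) le_rfl
    _ = Bnd m y v := rfl

def tau (m : ℕ) (y : Fin m → ℕ) (v : ℤ) : ℕ := Nat.findGreatest (fun n => v ≤ SS m y n) (Bnd m y v)

lemma tau_spec {v : ℤ} (hv : v ≤ Mx m y) : v ≤ SS m y (tau m y v) := by
  obtain ⟨n₀, hn₀, h₀⟩ := exists_Mx (m := m) (y := y)
  exact Nat.findGreatest_spec (P := fun n => v ≤ SS m y n) (m := n₀)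
    (le_of_lt (lt_Bnd hm hk hkm (show v ≤ SS m y n₀ by omega))) (show v ≤ SS m y n₀ by omega)

lemma tau_max {v : ℤ} {n : ℕ} (hn : tau m y v < n) : SS m y n < v := by
  by_cases h : n ≤ Bnd m y v
  · have := Nat.findGreatest_is_greatest (P := fun n => v ≤ SS m y n) hn h
    omega
  · by_contra hc
    have := lt_Bnd hm hk hkm (v := v) (n := n) (by omega)
    omega

lemma le_tau {v : ℤ} {c : ℕ} (hc : v ≤ SS m y c) : c ≤ tau m y v :=
  Nat.le_findGreatest (le_of_lt (lt_Bnd hm hk hkm hc)) hc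

lemma SS_tau {v : ℤ} (hv : v ≤ Mx m y) : SS m y (tau m y v) = v := by
  have h1 := tau_spec hm hk hkm hv
  by_contra h
  have h2 : v + 1 ≤ SS m y (tau m y v) := by omega
  have h3 := SS_step (m := m) (y := y) (tau m y v)
  have h4 := tau_max hm hk hkm (v := v) (n := tau m y v + 1) (by omega)
  omega

omit hm hk hkm in
lemma good_all (hm : 0 < m) (hk : ∑ i, y i = k) (hkm : k < m) {c : ℕ}
    (hc : ∀ r ∈ Finset.Icc 1 m, SS m y (c + r) < SS m y c) :
    ∀ n, c < n → SS m y n < SS m y c := by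
  intro n
  induction n using Nat.strong_induction_on with
  | _ n ih =>
    intro hn
    by_cases h : n ≤ c + m
    · have : n = c + (n - c) := by omega
      rw [this]
      exact hc (n - c) (Finset.mem_Icc.2 (by omega))
    · have h1 : n = (n - m) + m := by omega
      rw [h1, SS_add_m hm hk hkm]
      have h2 := ih (n - m) (by omega) (by omega)
      have h3 : (1:ℤ) ≤ ((m - k : ℕ) : ℤ) := by exact_mod_cast Nat.one_le_iff_ne_zero.2 (by omega)
      omega

lemma good_tau {v : ℤ} (hv : v ≤ Mx m y) :
    ∀ r ∈ Finset.Icc 1 m, SS m y (tau m y v + r) < SS m y (tau m y v) := by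
  intro r hr
  rw [SS_tau hm hk hkm hv]
  exact tau_max hm hk hkm (by have := (Finset.mem_Icc.1 hr).1; omega)

lemma good_eq_tau {c : ℕ} (hc : ∀ r ∈ Finset.Icc 1 m, SS m y (c + r) < SS m y c) :
    c = tau m y (SS m y c) := by
  have hvM : SS m y c ≤ Mx m y := SS_le_Mx hm hk hkm c
  have h1 : c ≤ tau m y (SS m y c) := le_tau hm hk hkm le_rfl
  rcases Nat.lt_or_ge c (tau m y (SS m y c)) with h | h
  · exfalso
    have h2 := good_all hm hk hkm hc _ h
    have h3 := SS_tau hm hk hkm hvM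
    omega
  · omega

lemma tau_ge_m_iff {v : ℤ} (hv : v ≤ Mx m y) :
    m ≤ tau m y v ↔ v + ((m - k : ℕ) : ℤ) ≤ Mx m y := by
  constructor
  · intro h
    have h1 : tau m y v = (tau m y v - m) + m := by omega
    have h2 : SS m y ((tau m y v - m) + m) = SS m y (tau m y v - m) - ((m-k:ℕ):ℤ) :=
      SS_add_m hm hk hkm _
    rw [← h1, SS_tau hm hk hkm hv] at h2
    have h3 := SS_le_Mx hm hk hkm (tau m y v - m)
    omega
  · intro h
    have h2 : SS m y (tau m y (v + ((m-k:ℕ):ℤ)) + m)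
        = SS m y (tau m y (v + ((m-k:ℕ):ℤ))) - ((m-k:ℕ):ℤ) := SS_add_m hm hk hkm _
    rw [SS_tau hm hk hkm h] at h2
    have h3 : v ≤ SS m y (tau m y (v + ((m-k:ℕ):ℤ)) + m) := by omega
    have := le_tau hm hk hkm h3
    omega

instance goodDec (m : ℕ) (y : Fin m → ℕ) :
    DecidablePred (fun c => ∀ r ∈ Finset.Icc 1 m, SS m y (c + r) < SS m y c) := fun _ =>
  Finset.decidableDforallFinset

lemma card_goodN :
    ((Finset.range m).filter
      (fun c => ∀ r ∈ Finset.Icc 1 m, SS m y (c + r) < SS m y c)).card = m - k := by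
  have hd1 : (1:ℤ) ≤ ((m - k : ℕ) : ℤ) := by exact_mod_cast Nat.one_le_iff_ne_zero.2 (by omega)
  have hcard : (Finset.Ioc (Mx m y - ((m-k:ℕ):ℤ)) (Mx m y)).card = m - k := by
    rw [Int.card_Ioc]
    simp
  rw [← hcard]
  symm
  apply Finset.card_bij (fun v _ => tau m y v)
  · intro v hv
    rw [Finset.mem_Ioc] at hv
    rw [Finset.mem_filter]
    constructor
    · rw [Finset.mem_range]
      by_contra h
      have := (tau_ge_m_iff hm hk hkm hv.2).1 (by omega)
      omega
    · exact good_tau hm hk hkm hv.2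
  · intro v hv v' hv' h
    rw [Finset.mem_Ioc] at hv hv'
    have e1 := SS_tau hm hk hkm hv.2
    have e2 := SS_tau hm hk hkm hv'.2
    rw [h] at e1
    omega
  · intro c hc
    rw [Finset.mem_filter, Finset.mem_range] at hc
    refine ⟨SS m y c, Finset.mem_Ioc.2 ⟨?_, SS_le_Mx hm hk hkm c⟩, (good_eq_tau hm hk hkm hc.2).symm⟩
    by_contra h
    have h2 : SS m y c + ((m-k:ℕ):ℤ) ≤ Mx m y := by omega
    have h3 := (tau_ge_m_iff hm hk hkm (SS_le_Mx hm hk hkm c)).2 h2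
    rw [← good_eq_tau hm hk hkm hc.2] at h3
    omega

end cyc

def rot {m : ℕ} (c : Fin m) (y : Fin m → ℕ) : Fin m → ℕ := fun i => y (i + c)

section rotsec
variable {m k : ℕ} {y : Fin m → ℕ}

lemma ps_zero (z : Fin m → ℕ) : ps z 0 = 0 := by simp [ps]

lemma rot_apply (c : Fin m) (r : ℕ) (hr : r < m) :
    rot c y ⟨r, hr⟩ = wrap m y ((c : ℕ) + r) := by
  have hm : 0 < m := by omega
  rw [wrap_eq hm]
  unfold rot
  congr 1
  ext
  simp [Fin.val_add]
  rw [Nat.add_comm]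

lemma ps_rot (c : Fin m) (r : ℕ) (hr : r ≤ m) :
    (ps (rot c y) r : ℤ) = SS m y ((c : ℕ) + r) - SS m y (c : ℕ) + r := by
  induction r with
  | zero => simp [ps_zero]
  | succ r ih =>
    have hrm : r < m := by omega
    rw [ps_succ _ r hrm, rot_apply c r hrm, show (c:ℕ) + (r+1) = ((c:ℕ) + r) + 1 from rfl,
      SS_succ]
    push_cast
    rw [ih (by omega)]
    ring

lemma rot_good_iff (hm : 0 < m) (c : Fin m) :
    (∀ r ∈ Finset.Icc 1 m, ps (rot c y) r < r) ↔
    (∀ r ∈ Finset.Icc 1 m, SS m y ((c:ℕ) + r) < SS m y (c:ℕ)) := by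
  apply forall₂_congr
  intro r hr
  have hrm : r ≤ m := (Finset.mem_Icc.1 hr).2
  have := ps_rot (y := y) c r hrm
  constructor
  · intro h
    have : (ps (rot c y) r : ℤ) < (r:ℤ) := by exact_mod_cast h
    omega
  · intro h
    have h2 : (ps (rot c y) r : ℤ) < (r:ℤ) := by omega
    exact_mod_cast h2

lemma card_rot_good [NeZero m] (hm : 0 < m) (hk : ∑ i, y i = k) (hkm : k < m) :
    (Finset.univ.filter (fun c : Fin m => ∀ r ∈ Finset.Icc 1 m, ps (rot c y) r < r)).card
      = m - k := by
  rw [← card_goodN hm hk hkm]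
  refine Finset.card_bij (fun c _ => (c : ℕ)) ?_ ?_ ?_
  · intro c hc
    rw [Finset.mem_filter] at hc ⊢
    exact ⟨Finset.mem_range.2 c.isLt, (rot_good_iff hm c).1 hc.2⟩
  · intro c _ c' _ h
    exact Fin.val_injective h
  · intro n hn
    rw [Finset.mem_filter, Finset.mem_range] at hn
    refine ⟨⟨n, hn.1⟩, Finset.mem_filter.2 ⟨Finset.mem_univ _, ?_⟩, rfl⟩
    exact (rot_good_iff hm ⟨n, hn.1⟩).2 hn.2

lemma rot_sum [NeZero m] (c : Fin m) : ∑ i, rot c y i = ∑ i, y i :=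
  Fintype.sum_equiv (Equiv.addRight c) _ _ (fun _ => rfl)

end rotsec

instance rotGoodDec (m : ℕ) (y : Fin m → ℕ) :
    DecidablePred (fun c : Fin m => ∀ r ∈ Finset.Icc 1 m, ps (rot c y) r < r) :=
  fun _ => Finset.decidableDforallFinset

section weights
variable (q : ℕ → ℝ)

def wt {m : ℕ} (y : Fin m → ℕ) : ℝ := ∏ i, q (y i)

def Cc (m j : ℕ) : ℝ := ∑ y ∈ seqs m j, wt q y

def ballot (m : ℕ) : Finset (Fin m → ℕ) :=
  (box m m).filter (fun y => ∀ r ∈ Finset.Icc 1 m, ps y r < r)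

def Bb (m k : ℕ) : ℝ := ∑ y ∈ (ballot m).filter (fun y => ∑ i, y i = k), wt q y

variable {m k : ℕ}

lemma rot_wt [NeZero m] (c : Fin m) (y : Fin m → ℕ) : wt q (rot c y) = wt q y :=
  Fintype.prod_equiv (Equiv.addRight c) _ _ (fun _ => rfl)

lemma coord_le_sum {y : Fin m → ℕ} (i : Fin m) : y i ≤ ∑ i, y i :=
  Finset.single_le_sum (f := y) (fun _ _ => Nat.zero_le _) (Finset.mem_univ i)

lemma coord_le_ps {y : Fin m → ℕ} (i : Fin m) {s : ℕ} (hi : (i:ℕ) < s) : y i ≤ ps y s := by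
  unfold ps
  have := Finset.single_le_sum (f := fun j : Fin m => if (j:ℕ) < s then y j else 0)
    (fun j _ => by positivity) (Finset.mem_univ i)
  simpa [hi] using this

lemma mem_ballot {y : Fin m → ℕ} :
    y ∈ ballot m ↔ ∀ r ∈ Finset.Icc 1 m, ps y r < r := by
  constructor
  · exact fun h => (Finset.mem_filter.1 h).2
  · intro h
    refine Finset.mem_filter.2 ⟨Fintype.mem_piFinset.2 (fun i => Finset.mem_range.2 ?_), h⟩
    have h1 : y i ≤ ps y ((i:ℕ)+1) := coord_le_ps i (by omega)
    have h2 := h ((i:ℕ)+1) (Finset.mem_Icc.2 ⟨by omega, by have := i.isLt; omega⟩)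
    omega

lemma ballot_sum_lt {y : Fin m → ℕ} (hm : 0 < m) (hy : y ∈ ballot m) : ∑ i, y i < m := by
  have := (mem_ballot.1 hy) m (Finset.mem_Icc.2 ⟨hm, le_rfl⟩)
  rwa [ps_self] at this

lemma Bb_eq_sum_ite :
    Bb q m k = ∑ z ∈ seqs m k, (if (∀ r ∈ Finset.Icc 1 m, ps z r < r) then wt q z else 0) := by
  rw [Finset.sum_ite, Finset.sum_const_zero, add_zero, Bb]
  apply Finset.sum_congr _ (fun _ _ => rfl)
  ext z
  rw [Finset.mem_filter, Finset.mem_filter, mem_seqs, mem_ballot]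
  exact ⟨fun ⟨h1, h2⟩ => ⟨h2, h1⟩, fun ⟨h1, h2⟩ => ⟨h2, h1⟩⟩

/-- The ballot-type theorem, via the cycle lemma. -/
lemma ballot_thm (hm : 0 < m) (hkm : k < m) :
    (m : ℝ) * Bb q m k = ((m - k : ℕ) : ℝ) * Cc q m k := by
  haveI : NeZero m := ⟨by omega⟩
  have key : ∀ c : Fin m,
      (∑ y ∈ seqs m k, if (∀ r ∈ Finset.Icc 1 m, ps (rot c y) r < r) then wt q y else 0)
        = Bb q m k := by
    intro c
    rw [Bb_eq_sum_ite]
    apply Finset.sum_nbij' (rot c) (rot (-c))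
    · intro a ha; rw [mem_seqs] at ha ⊢; rw [rot_sum]; exact ha
    · intro a ha; rw [mem_seqs] at ha ⊢; rw [rot_sum]; exact ha
    · intro a _; funext i; show a (i + -c + c) = a i; rw [neg_add_cancel_right]
    · intro a _; funext i; show a (i + c + -c) = a i; rw [add_neg_cancel_right]
    · intro a _
      congr 1
      rw [rot_wt]
  have lhs : ∑ c : Fin m, (∑ y ∈ seqs m k,
      if (∀ r ∈ Finset.Icc 1 m, ps (rot c y) r < r) then wt q y else 0) = (m:ℝ) * Bb q m k := by
    rw [Finset.sum_congr rfl (fun c _ => key c), Finset.sum_const, Finset.card_univ,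
      Fintype.card_fin, nsmul_eq_mul]
  rw [← lhs, Finset.sum_comm]
  have inner : ∀ y ∈ seqs m k, (∑ c : Fin m,
      if (∀ r ∈ Finset.Icc 1 m, ps (rot c y) r < r) then wt q y else 0)
        = ((m - k : ℕ) : ℝ) * wt q y := by
    intro y hy
    rw [Finset.sum_ite, Finset.sum_const_zero, add_zero, Finset.sum_const,
      card_rot_good hm (mem_seqs.1 hy) hkm, nsmul_eq_mul]
  rw [Finset.sum_congr rfl inner, ← Finset.mul_sum]
  rfl

lemma Bb_eq (hm : 0 < m) (hkm : k < m) :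
    Bb q m k = (((m - k : ℕ) : ℝ) / (m : ℝ)) * Cc q m k := by
  have hm' : (m:ℝ) ≠ 0 := by positivity
  field_simp
  rw [mul_comm (Bb q m k), ballot_thm q hm hkm]

def splitL {t : ℕ} (σ : ℕ) (h : σ ≤ t) (y : Fin t → ℕ) : Fin σ → ℕ :=
  fun i => y ⟨i, lt_of_lt_of_le i.isLt h⟩

def splitR {t : ℕ} (σ : ℕ) (h : σ ≤ t) (y : Fin t → ℕ) : Fin (t - σ) → ℕ :=
  fun i => y ⟨σ + i, by have := i.isLt; omega⟩

def glue {t σ : ℕ} (h : σ ≤ t) (a : Fin σ → ℕ) (b : Fin (t - σ) → ℕ) : Fin t → ℕ :=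
  fun i => if hi : (i:ℕ) < σ then a ⟨i, hi⟩ else b ⟨(i:ℕ) - σ, by have := i.isLt; omega⟩

section splits
variable {t σ : ℕ} (h : σ ≤ t) (y : Fin t → ℕ)

lemma ps_splitL {s : ℕ} (hs : s ≤ σ) : ps (splitL σ h y) s = ps y s := by
  induction s with
  | zero => simp [ps_zero]
  | succ s ih =>
    have h1 : s < σ := by omega
    have h2 : s < t := by omega
    rw [ps_succ _ s h1, ps_succ _ s h2, ih (by omega)]
    rfl

lemma ps_splitR {r : ℕ} (hr : r ≤ t - σ) : ps y (σ + r) = ps y σ + ps (splitR σ h y) r := by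
  induction r with
  | zero => simp [ps_zero]
  | succ r ih =>
    have h1 : r < t - σ := by omega
    have h2 : σ + r < t := by omega
    rw [show σ + (r+1) = (σ + r) + 1 from rfl, ps_succ _ _ h2, ps_succ _ r h1, ih (by omega)]
    rw [Nat.add_assoc]
    rfl

lemma sum_splitL : ∑ i, splitL σ h y i = ps y σ := by
  rw [← ps_self, ps_splitL h y le_rfl]

lemma sum_eq_ps_add : ∑ i, y i = ps y σ + ∑ i, splitR σ h y i := by
  have h1 := ps_splitR h y (r := t - σ) le_rfl
  rw [show σ + (t - σ) = t by omega] at h1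
  rw [← ps_self y, ← ps_self (splitR σ h y), h1]

lemma glue_split : glue h (splitL σ h y) (splitR σ h y) = y := by
  funext i
  unfold glue splitL splitR
  by_cases hi : (i:ℕ) < σ
  · rw [dif_pos hi]
  · rw [dif_neg hi]
    congr 1
    ext
    simp
    omega

lemma splitL_glue (a : Fin σ → ℕ) (b : Fin (t - σ) → ℕ) : splitL σ h (glue h a b) = a := by
  funext i
  simp [glue, splitL, i.isLt]

lemma splitR_glue (a : Fin σ → ℕ) (b : Fin (t - σ) → ℕ) : splitR σ h (glue h a b) = b := by
  funext i
  have hge : ¬ ((σ + (i:ℕ)) < σ) := by omega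
  simp [glue, splitR, hge]

lemma wt_glue (q : ℕ → ℝ) : wt q y = wt q (splitL σ h y) * wt q (splitR σ h y) := by
  unfold wt
  rw [← Finset.prod_filter_mul_prod_filter_not Finset.univ (fun i : Fin t => (i:ℕ) < σ)]
  congr 1
  · refine Finset.prod_bij'
      (fun (a : Fin t) (ha : a ∈ Finset.univ.filter (fun i : Fin t => (i:ℕ) < σ)) =>
        (⟨(a:ℕ), (Finset.mem_filter.1 ha).2⟩ : Fin σ))
      (fun (a : Fin σ) _ => (⟨(a:ℕ), lt_of_lt_of_le a.isLt h⟩ : Fin t))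
      ?_ ?_ ?_ ?_ ?_
    · intros a ha; exact Finset.mem_univ _
    · intro a _
      exact Finset.mem_filter.2 ⟨Finset.mem_univ _, a.isLt⟩
    · intro a _; rfl
    · intro a _; rfl
    · intro a _; rfl
  · refine Finset.prod_bij'
      (fun (a : Fin t) (ha : a ∈ Finset.univ.filter (fun i : Fin t => ¬ (i:ℕ) < σ)) =>
        (⟨(a:ℕ) - σ, by
          have h1 := a.isLt
          have h2 := (Finset.mem_filter.1 ha).2
          omega⟩ : Fin (t - σ)))
      (fun (a : Fin (t - σ)) _ => (⟨σ + (a:ℕ), by have := a.isLt; omega⟩ : Fin t))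
      ?_ ?_ ?_ ?_ ?_
    · intros a ha; exact Finset.mem_univ _
    · intro a _
      refine Finset.mem_filter.2 ⟨Finset.mem_univ _, ?_⟩
      simp only [Fin.val_mk]
      omega
    · intro a ha
      have h2 := (Finset.mem_filter.1 ha).2
      ext
      simp only
      omega
    · intro a _; ext; simp
    · intro a ha
      have h2 := (Finset.mem_filter.1 ha).2
      unfold splitR
      congr 2
      ext
      simp only
      omega

end splits

variable {u t j : ℕ}

def lowset (u t : ℕ) : Finset (Fin t → ℕ) := (box t (u+t)).filter (fun y => ∑ i, y i < u + t)

def Gpred (u t : ℕ) (y : Fin t → ℕ) : Prop := ∀ s ∈ Finset.Icc 1 t, ps y s < u + s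

instance GpredDec (u t : ℕ) : DecidablePred (Gpred u t) := fun _ => Finset.decidableDforallFinset

def Apred (u t j : ℕ) (y : Fin t → ℕ) : Prop :=
  ps y (j-u) = j ∧ ∀ s ∈ Finset.Icc (j-u+1) t, ps y s < u + s

instance ApredDec (u t j : ℕ) : DecidablePred (Apred u t j) := fun _ => instDecidableAnd

lemma mem_lowset {y : Fin t → ℕ} : y ∈ lowset u t ↔ ∑ i, y i < u + t := by
  constructor
  · exact fun h => (Finset.mem_filter.1 h).2
  · intro h
    refine Finset.mem_filter.2 ⟨Fintype.mem_piFinset.2 (fun i => Finset.mem_range.2 ?_), h⟩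
    have := coord_le_sum (y := y) i
    omega

lemma sum_lowset : ∑ y ∈ lowset u t, wt q y = ∑ j ∈ Finset.range (u+t), Cc q t j := by
  rw [← Finset.sum_fiberwise_of_maps_to (g := fun y : Fin t → ℕ => ∑ i, y i)
    (fun y hy => Finset.mem_range.2 (mem_lowset.1 hy))]
  apply Finset.sum_congr rfl
  intro j hj
  apply Finset.sum_congr _ (fun _ _ => rfl)
  ext z
  rw [Finset.mem_filter, mem_lowset, mem_seqs]
  constructor
  · exact fun h => h.2
  · intro h
    exact ⟨by rw [h]; exact Finset.mem_range.1 hj, h⟩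

lemma Aset_disj (hu : 1 ≤ u) {j j' : ℕ} (hj : j ∈ Finset.Icc (u+1) (u+t-1))
    (hj' : j' ∈ Finset.Icc (u+1) (u+t-1)) (hlt : j < j') {y : Fin t → ℕ}
    (hy : Apred u t j y) (hy' : Apred u t j' y) : False := by
  rw [Finset.mem_Icc] at hj hj'
  have h1 : j' - u ∈ Finset.Icc (j - u + 1) t := Finset.mem_Icc.2 (by omega)
  have h2 := hy.2 _ h1
  have h3 := hy'.1
  omega

lemma ruin_decomp (hu : 1 ≤ u) (ht : 1 ≤ t) :
    (lowset u t).filter (fun y => ¬ Gpred u t y)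
      = (Finset.Icc (u+1) (u+t-1)).biUnion (fun j => (lowset u t).filter (Apred u t j)) := by
  ext y
  rw [Finset.mem_filter, Finset.mem_biUnion]
  constructor
  · rintro ⟨hlow, hbad⟩
    unfold Gpred at hbad
    push_neg at hbad
    obtain ⟨s₀, hs₀, hps₀⟩ := hbad
    have hVne : ((Finset.Icc 1 t).filter (fun s => u + s ≤ ps y s)).Nonempty :=
      ⟨s₀, Finset.mem_filter.2 ⟨hs₀, hps₀⟩⟩
    set σ := ((Finset.Icc 1 t).filter (fun s => u + s ≤ ps y s)).max' hVne with hσdef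
    have hσmem := Finset.max'_mem _ hVne
    rw [Finset.mem_filter, Finset.mem_Icc] at hσmem
    obtain ⟨⟨hσ1, hσt⟩, hσps⟩ := hσmem
    rw [← hσdef] at hσps hσ1 hσt
    have hsum : ps y t < u + t := by
      rw [ps_self]; exact mem_lowset.1 hlow
    have hσlt : σ < t := by
      rcases Nat.lt_or_ge σ t with h | h
      · exact h
      · exfalso; have : σ = t := by omega
        rw [this] at hσps; omega
    have hnot : ∀ s, σ < s → s ≤ t → ps y s < u + s := by
      intro s hs hst
      by_contra hcon
      have : s ∈ (Finset.Icc 1 t).filter (fun s => u + s ≤ ps y s) :=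
        Finset.mem_filter.2 ⟨Finset.mem_Icc.2 ⟨by omega, hst⟩, by omega⟩
      have := Finset.le_max' _ s this
      omega
    have hps1 : ps y (σ+1) < u + (σ+1) := hnot (σ+1) (by omega) (by omega)
    have hmono : ps y σ ≤ ps y (σ+1) := ps_mono y (by omega)
    have hexact : ps y σ = u + σ := by omega
    refine ⟨u + σ, Finset.mem_Icc.2 ⟨by omega, by omega⟩, Finset.mem_filter.2 ⟨hlow, ?_, ?_⟩⟩
    · rw [show u + σ - u = σ by omega]; exact hexact
    · intro s hs
      rw [Finset.mem_Icc, show u + σ - u = σ by omega] at hs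
      exact hnot s (by omega) hs.2
  · rintro ⟨j, hj, hmem⟩
    rw [Finset.mem_filter] at hmem
    rw [Finset.mem_Icc] at hj
    refine ⟨hmem.1, ?_⟩
    intro hG
    have h1 := hG (j - u) (Finset.mem_Icc.2 ⟨by omega, by omega⟩)
    have h2 := hmem.2.1
    omega

lemma sum_Aset (hu : 1 ≤ u) (ht : 1 ≤ t) (hj : j ∈ Finset.Icc (u+1) (u+t-1)) :
    ∑ y ∈ (lowset u t).filter (Apred u t j), wt q y
      = Cc q (j-u) j * ∑ b ∈ ballot (t - (j-u)), wt q b := by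
  rw [Finset.mem_Icc] at hj
  set σ := j - u with hσdef
  have hσt : σ ≤ t := by omega
  have hσ1 : 1 ≤ σ := by omega
  have hσlt : σ < t := by omega
  have hjσ : j = u + σ := by omega
  rw [Cc, Finset.sum_mul_sum, ← Finset.sum_product']
  apply Finset.sum_nbij' (fun y => (splitL σ hσt y, splitR σ hσt y))
    (fun p => glue hσt p.1 p.2)
  · intro y hy
    rw [Finset.mem_filter] at hy
    obtain ⟨hlow, hps, hafter⟩ := hy
    rw [Finset.mem_product]
    constructor
    · rw [mem_seqs, sum_splitL]
      exact hps
    · rw [mem_ballot]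
      intro r hr
      rw [Finset.mem_Icc] at hr
      rw [← hσdef] at hps hafter
      show ps (splitR σ hσt y) r < r
      have h1 := ps_splitR hσt y (r := r) hr.2
      have h2 := hafter (σ + r) (Finset.mem_Icc.2 ⟨by omega, by omega⟩)
      omega
  · intro p hp
    rw [Finset.mem_product, mem_seqs, mem_ballot] at hp
    obtain ⟨ha, hb⟩ := hp
    have hpsσ : ps (glue hσt p.1 p.2) σ = j := by
      rw [← ps_splitL hσt _ le_rfl, splitL_glue, ps_self, ha]
    have hball : ∀ r, 1 ≤ r → r ≤ t - σ → ps p.2 r < r := fun r h1 h2 =>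
      hb r (Finset.mem_Icc.2 ⟨h1, h2⟩)
    have hsumb : ∑ i, p.2 i < t - σ := by
      have := hball (t - σ) (by omega) le_rfl
      rwa [ps_self] at this
    have hsum : ∑ i, glue hσt p.1 p.2 i < u + t := by
      rw [sum_eq_ps_add hσt, hpsσ, splitR_glue]
      omega
    rw [Finset.mem_filter]
    refine ⟨mem_lowset.2 hsum, hpsσ, ?_⟩
    intro s hs
    rw [Finset.mem_Icc] at hs
    have hr : s = σ + (s - σ) := by omega
    have h1 := ps_splitR hσt (glue hσt p.1 p.2) (r := s - σ) (by omega)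
    rw [splitR_glue] at h1
    have h2 := hball (s - σ) (by omega) (by omega)
    rw [hr, h1, hpsσ]
    omega
  · intro y _; exact glue_split hσt y
  · intro p _
    ext
    · rw [splitL_glue]
    · rw [splitR_glue]
  · intro y _
    exact wt_glue hσt y q

lemma ballot_fiber {m : ℕ} (hm : 0 < m) :
    ∑ b ∈ ballot m, wt q b = ∑ k ∈ Finset.range m, Bb q m k := by
  rw [← Finset.sum_fiberwise_of_maps_to (g := fun b : Fin m → ℕ => ∑ i, b i)
    (fun b hb => Finset.mem_range.2 (ballot_sum_lt hm hb))]
  rfl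

lemma combo (hu : 1 ≤ u) (ht : 1 ≤ t) :
    ∑ y ∈ (lowset u t).filter (Gpred u t), wt q y
      = (∑ j ∈ Finset.range (u + t), Cc q t j) -
        ∑ j ∈ Finset.Icc (u+1) (u+t-1), Cc q (j-u) j *
          (∑ n ∈ Finset.Icc j (u+t-1),
            (((t+u-n : ℕ) : ℝ) / ((t+u-j : ℕ) : ℝ)) * Cc q (t+u-j) (n-j)) := by
  have hsplit := Finset.sum_filter_add_sum_filter_not (lowset u t) (Gpred u t) (wt q)
  have hruin : ∑ y ∈ (lowset u t).filter (fun y => ¬ Gpred u t y), wt q y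
      = ∑ j ∈ Finset.Icc (u+1) (u+t-1), Cc q (j-u) j *
          (∑ n ∈ Finset.Icc j (u+t-1),
            (((t+u-n : ℕ) : ℝ) / ((t+u-j : ℕ) : ℝ)) * Cc q (t+u-j) (n-j)) := by
    rw [ruin_decomp hu ht, Finset.sum_biUnion]
    · apply Finset.sum_congr rfl
      intro j hj
      have hj2 := hj
      rw [Finset.mem_Icc] at hj2
      rw [sum_Aset q hu ht hj, ballot_fiber q (m := t - (j - u)) (by omega)]
      have hm : t - (j - u) = t + u - j := by omega
      rw [hm]
      congr 1
      apply Finset.sum_nbij' (fun k => j + k) (fun n => n - j)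
      · intro k hk
        rw [Finset.mem_range] at hk
        rw [Finset.mem_Icc]
        omega
      · intro n hn
        rw [Finset.mem_Icc] at hn
        rw [Finset.mem_range]
        omega
      · intro k _; omega
      · intro n hn; rw [Finset.mem_Icc] at hn; omega
      · intro k hk
        rw [Finset.mem_range] at hk
        rw [Bb_eq q (by omega) (by omega)]
        have e1 : t + u - (j + k) = (t + u - j) - k := by omega
        have e2 : j + k - j = k := by omega
        rw [e1, e2]
    · intro a ha b hb hab
      simp only [Function.onFun]
      rw [Finset.disjoint_left]
      intro y hy hy'
      rw [Finset.mem_filter] at hy hy'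
      rcases Nat.lt_or_ge a b with h | h
      · exact Aset_disj hu ha hb h hy.2 hy'.2
      · exact Aset_disj hu hb ha (by omega) hy'.2 hy.2
  rw [← sum_lowset (q := q), ← hsplit, hruin]
  ring

end weights
end SealAux
end SealAuxSection


section partA
open SealAux
variable [IsProbabilityMeasure (ℙ : Measure Ω)] (Y : ℕ → Ω → ℕ)

lemma atom_eq (hY : ∀ i, Measurable (Y i))
    (hindep : iIndepFun Y ℙ)
    (hid : ∀ i, IdentDistrib (Y i) (Y 0) ℙ ℙ) (m : ℕ) (z : Fin m → ℕ) :
    ℙ {ω | (fun i : Fin m => Y i ω) = z} = ∏ i : Fin m, ℙ {ω | Y 0 ω = z i} := by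
  classical
  set z' : ℕ → ℕ := fun n => if h : n < m then z ⟨n, h⟩ else 0 with hz'
  have hset : {ω | (fun i : Fin m => Y i ω) = z} = ⋂ i ∈ Finset.range m, Y i ⁻¹' {z' i} := by
    ext ω
    simp only [Set.mem_setOf_eq, Set.mem_iInter, Set.mem_preimage, Set.mem_singleton_iff,
      Finset.mem_range]
    constructor
    · intro h i hi
      rw [hz']
      simp only [dif_pos hi]
      exact congrFun h ⟨i, hi⟩
    · intro h
      funext i
      have := h i i.isLt
      rw [hz'] at this
      simpa [i.isLt] using this
  rw [hset]
  rw [hindep.measure_inter_preimage_eq_mul (Finset.range m) (sets := fun i => {z' i})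
    (fun i _ => measurableSet_singleton _)]
  have hident : ∀ i, ℙ (Y i ⁻¹' {z' i}) = ℙ {ω | Y 0 ω = z' i} := by
    intro i
    have := (hid i).measure_mem_eq (s := {z' i}) (measurableSet_singleton _)
    exact this
  rw [Finset.prod_congr rfl (fun i _ => hident i)]
  rw [← Fin.prod_univ_eq_prod_range (fun n => ℙ {ω | Y 0 ω = z' n}) m]
  apply Finset.prod_congr rfl
  intro i _
  congr 1
  rw [hz']
  simp [i.isLt]

lemma master (hY : ∀ i, Measurable (Y i))
    (hindep : iIndepFun Y ℙ)
    (hid : ∀ i, IdentDistrib (Y i) (Y 0) ℙ ℙ) (m : ℕ) (F : Finset (Fin m → ℕ)) :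
    ℙ {ω | (fun i : Fin m => Y i ω) ∈ F} = ∑ z ∈ F, ∏ i : Fin m, ℙ {ω | Y 0 ω = z i} := by
  classical
  have hset : {ω | (fun i : Fin m => Y i ω) ∈ F}
      = ⋃ z ∈ F, {ω | (fun i : Fin m => Y i ω) = z} := by
    ext ω
    simp only [Set.mem_setOf_eq, Set.mem_iUnion]
    constructor
    · intro h; exact ⟨_, h, rfl⟩
    · rintro ⟨z, hz, h⟩; rw [h]; exact hz
  have hmeas : ∀ z : Fin m → ℕ, MeasurableSet {ω | (fun i : Fin m => Y i ω) = z} := by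
    intro z
    have : {ω | (fun i : Fin m => Y i ω) = z}
        = ⋂ i : Fin m, Y i ⁻¹' {z i} := by
      ext ω
      simp only [Set.mem_setOf_eq, Set.mem_iInter, Set.mem_preimage, Set.mem_singleton_iff]
      constructor
      · intro h i; exact congrFun h i
      · intro h; funext i; exact h i
    rw [this]
    exact MeasurableSet.iInter (fun i => (hY i) (measurableSet_singleton _))
  rw [hset, measure_biUnion_finset ?disj (fun z _ => hmeas z)]
  · exact Finset.sum_congr rfl (fun z hz => atom_eq Y hY hindep hid m z)
  case disj =>
    intro z hz z' hz' hne
    rw [Function.onFun, Set.disjoint_left]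
    intro ω h1 h2
    exact hne (h1.symm.trans h2)

/-- The common law of the claims, as a real-valued point mass function. -/
def qq : ℕ → ℝ := fun c => (ℙ {ω | Y 0 ω = c}).toReal

lemma masterR (hY : ∀ i, Measurable (Y i))
    (hindep : iIndepFun Y ℙ)
    (hid : ∀ i, IdentDistrib (Y i) (Y 0) ℙ ℙ) (m : ℕ) (F : Finset (Fin m → ℕ)) :
    (ℙ {ω | (fun i : Fin m => Y i ω) ∈ F}).toReal = ∑ z ∈ F, wt (qq Y) z := by
  rw [master Y hY hindep hid m F,
    ENNReal.toReal_sum (fun z _ => (ENNReal.prod_lt_top (fun i _ => measure_lt_top ℙ _)).ne)]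
  exact Finset.sum_congr rfl (fun z _ => ENNReal.toReal_prod _ _)

lemma agg_eq_ps {t s : ℕ} (hst : s ≤ t) (ω : Ω) :
    aggClaims Y s ω = ps (fun i : Fin t => Y i ω) s := by
  have h1 : ps (fun i : Fin t => Y i ω) s
      = ∑ n ∈ Finset.range t, (if n < s then Y n ω else 0) :=
    Fin.sum_univ_eq_sum_range (fun n => if n < s then Y n ω else 0) t
  have h2 : ∑ n ∈ Finset.range s, (if n < s then Y n ω else 0)
      = ∑ n ∈ Finset.range t, (if n < s then Y n ω else 0) :=
    Finset.sum_subset (Finset.range_subset_range.2 hst)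
      (fun x _ hx => if_neg (by simpa using hx))
  have h3 : aggClaims Y s ω = ∑ n ∈ Finset.range s, (if n < s then Y n ω else 0) :=
    Finset.sum_congr rfl (fun n hn => (if_pos (Finset.mem_range.1 hn)).symm)
  rw [h3, h2, h1]

lemma risk_iff (u s : ℕ) (ω : Ω) :
    riskProc Y (u : ℤ) s ω ≤ 0 ↔ u + s ≤ aggClaims Y s ω := by
  unfold riskProc
  omega

lemma conv_eq (hY : ∀ i, Measurable (Y i))
    (hindep : iIndepFun Y ℙ)
    (hid : ∀ i, IdentDistrib (Y i) (Y 0) ℙ ℙ) (m j : ℕ) :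
    conv Y m j = Cc (qq Y) m j := by
  have hset : {ω | aggClaims Y m ω = j} = {ω | (fun i : Fin m => Y i ω) ∈ seqs m j} := by
    ext ω
    simp only [Set.mem_setOf_eq, mem_seqs]
    rw [agg_eq_ps Y le_rfl ω, ps_self]
  rw [conv, hset, masterR Y hY hindep hid, Cc]

lemma ruin_event {u t : ℕ} (hu : 1 ≤ u) (ht : 1 ≤ t) :
    {ω | ((t + 1 : ℕ) : ℕ∞) ≤ ruinTime Y (u : ℤ) ω}
      = {ω | (fun i : Fin t => Y i ω) ∈ (lowset u t).filter (Gpred u t)} := by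
  ext ω
  simp only [Set.mem_setOf_eq, Finset.mem_filter]
  have hG : (((t + 1 : ℕ) : ℕ∞) ≤ ruinTime Y (u : ℤ) ω) ↔ Gpred u t (fun i : Fin t => Y i ω) := by
    constructor
    · intro h s hs
      rw [Finset.mem_Icc] at hs
      rw [← agg_eq_ps Y hs.2 ω]
      by_contra hcon
      have hr : riskProc Y (u : ℤ) s ω ≤ 0 := (risk_iff Y u s ω).2 (by omega)
      have hmem : ((s : ℕ∞)) ∈ ((fun t : ℕ => (t : ℕ∞)) '' {t : ℕ | 1 ≤ t ∧ riskProc Y u t ω ≤ 0}) :=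
        ⟨s, ⟨hs.1, hr⟩, rfl⟩
      have h2 : ruinTime Y (u : ℤ) ω ≤ (s : ℕ∞) := csInf_le (OrderBot.bddBelow _) hmem
      have h3 : ((t + 1 : ℕ) : ℕ∞) ≤ (s : ℕ∞) := le_trans h h2
      rw [Nat.cast_le] at h3
      omega
    · intro h
      apply le_sInf
      rintro b ⟨s, ⟨hs1, hrisk⟩, rfl⟩
      rw [risk_iff] at hrisk
      rw [Nat.cast_le]
      by_contra hcon
      have hst : s ≤ t := by omega
      have := h s (Finset.mem_Icc.2 ⟨hs1, hst⟩)
      rw [← agg_eq_ps Y hst ω] at this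
      omega
  rw [hG]
  constructor
  · intro h
    refine ⟨mem_lowset.2 ?_, h⟩
    have := h t (Finset.mem_Icc.2 ⟨ht, le_rfl⟩)
    rw [← ps_self]
    omega
  · exact fun h => h.2

end partA

/-- Seal-type formula for the finite-time survival probability. -/
theorem seal_formula
    [IsProbabilityMeasure (ℙ : Measure Ω)]
    (Y : ℕ → Ω → ℕ) (hY : ∀ i, Measurable (Y i))
    (hindep : iIndepFun Y ℙ)
    (hid : ∀ i, IdentDistrib (Y i) (Y 0) ℙ ℙ)
    (u : ℕ) (hu : 1 ≤ u) (t : ℕ) (ht : 1 ≤ t) :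
    (ℙ {ω | ((t + 1 : ℕ) : ℕ∞) ≤ ruinTime Y (u : ℤ) ω}).toReal =
      (∑ j ∈ Finset.range (u + t), conv Y t j) -
      ∑ j ∈ Finset.Icc (u + 1) (u + t - 1),
        conv Y (j - u) j *
          (∑ n ∈ Finset.Icc j (u + t - 1),
            (((t + u - n : ℕ) : ℝ) / ((t + u - j : ℕ) : ℝ)) * conv Y (t + u - j) (n - j)) := by
  rw [ruin_event Y hu ht, masterR Y hY hindep hid, SealAux.combo (qq Y) hu ht]
  simp only [conv_eq Y hY hindep hid]

end
end

section
/- (Recursive representation of finite-time Parisian ruin) For u ≥ 1, ζ ≥ 1 and t ≥ ζ + 2: P_u(τ^ζ ≥ t) = P_u(T_0 ≥ t − ζ) + Σ_{s=1}^{t−ζ−1} Σ_{ω=1}^{ζ} Σ_{z=0}^{ω−1} P_u(T_0 = s, −R_{T_0} = z) · P(τ_{z+1} = ω) · P_1(τ^ζ ≥ t − ω − s), where P(τ_{z+1} = ω) = ((z+1)/ω) p^{*ω}_{ω−z−1} is the law of the first passage of the walk from 0 to level z+1. -/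
open MeasureTheory ProbabilityTheory Filter
open scoped ENNReal

noncomputable section

variable {Ω : Type*} [MeasureSpace Ω]

/-- Last time strictly before `n` at which the risk process was strictly positive. -/
def lastUp (Y : ℕ → Ω → ℕ) (u : ℤ) (n : ℕ) (ω : Ω) : ℕ :=
  sSup {s : ℕ | s < n ∧ 0 < riskProc Y u s ω}

/-- Parisian ruin time with delay `ζ`. -/
def parisian (Y : ℕ → Ω → ℕ) (u : ℤ) (ζ : ℕ) (ω : Ω) : ℕ∞ :=
  sInf ((fun n : ℕ => (n : ℕ∞)) ''
    {n : ℕ | ζ < n - lastUp Y u n ω ∧ riskProc Y u n ω ≤ 0})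

namespace ParisAux


def ind (P : Prop) : ℝ≥0∞ := have := Classical.propDecidable P; if P then 1 else 0

lemma ind_true {P : Prop} (h : P) : ind P = 1 := by simp [ind, h]
lemma ind_false {P : Prop} (h : ¬ P) : ind P = 0 := by simp [ind, h]
lemma ind_congr {P Q : Prop} (h : P ↔ Q) : ind P = ind Q := by
  by_cases hP : P
  · rw [ind_true hP, ind_true (h.mp hP)]
  · rw [ind_false hP, ind_false (fun hq => hP (h.mpr hq))]
lemma ind_mul_ind (P Q : Prop) : ind P * ind Q = ind (P ∧ Q) := by
  by_cases hP : P <;> by_cases hQ : Q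
  · rw [ind_true hP, ind_true hQ, ind_true ⟨hP, hQ⟩, one_mul]
  · rw [ind_false hQ, ind_false (fun h : P ∧ Q => hQ h.2), mul_zero]
  · rw [ind_false hP, ind_false (fun h : P ∧ Q => hP h.1), zero_mul]
  · rw [ind_false hP, ind_false (fun h : P ∧ Q => hP h.1), zero_mul]

def dS (y : ℕ → ℕ) (n : ℕ) : ℕ := ∑ i ∈ Finset.range n, y i
def dR (u : ℤ) (y : ℕ → ℕ) (n : ℕ) : ℤ := u + n - dS y n
def shf (k : ℕ) (y : ℕ → ℕ) : ℕ → ℕ := fun i => y (k + i)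

def noRuin (u : ℤ) (y : ℕ → ℕ) (m : ℕ) : Prop := ∀ n, 1 ≤ n → n < m → 0 < dR u y n
def ruinAt (u : ℤ) (y : ℕ → ℕ) (s : ℕ) : Prop := noRuin u y s ∧ dR u y s ≤ 0
def parisGe (u : ℤ) (ζ t : ℕ) (y : ℕ → ℕ) : Prop :=
  ∀ n < t, dR u y n ≤ 0 → ∃ s < n, 0 < dR u y s ∧ n ≤ s + ζ
def fpAt (z w : ℕ) (y : ℕ → ℕ) : Prop :=
  dR (-(z : ℤ)) y w = 1 ∧ ∀ n < w, dR (-(z : ℤ)) y n ≤ 0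

lemma dS_add (y : ℕ → ℕ) (k n : ℕ) : dS y (k + n) = dS y k + dS (shf k y) n := by
  unfold dS shf
  rw [Finset.sum_range_add]

lemma dR_zero (u : ℤ) (y : ℕ → ℕ) : dR u y 0 = u := by simp [dR, dS]

lemma dR_shf (u : ℤ) (y : ℕ → ℕ) (k n : ℕ) :
    dR u y (k + n) = dR (dR u y k) (shf k y) n := by
  unfold dR
  rw [dS_add]
  push_cast
  ring

lemma dR_succ (u : ℤ) (y : ℕ → ℕ) (n : ℕ) : dR u y (n + 1) = dR u y n + 1 - y n := by
  unfold dR dS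
  rw [Finset.sum_range_succ]
  push_cast
  ring

lemma dR_le_add (u : ℤ) (y : ℕ → ℕ) (n k : ℕ) : dR u y (n + k) ≤ dR u y n + k := by
  induction k with
  | zero => simp
  | succ k ih =>
    have h1 := dR_succ u y (n + k)
    have h2 : n + (k + 1) = (n + k) + 1 := rfl
    rw [h2, h1]
    push_cast
    omega

lemma dS_congr {y y' : ℕ → ℕ} {m : ℕ} (h : ∀ i < m, y i = y' i) {n : ℕ} (hn : n ≤ m) :
    dS y n = dS y' n := by
  unfold dS
  exact Finset.sum_congr rfl fun i hi => h i (lt_of_lt_of_le (Finset.mem_range.mp hi) hn)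

lemma dR_congr {y y' : ℕ → ℕ} {m : ℕ} (h : ∀ i < m, y i = y' i) {u : ℤ} {n : ℕ} (hn : n ≤ m) :
    dR u y n = dR u y' n := by
  unfold dR
  rw [dS_congr h hn]

lemma noRuin_congr {y y' : ℕ → ℕ} {m : ℕ} (h : ∀ i < m, y i = y' i) {u : ℤ} {k : ℕ}
    (hk : k ≤ m + 1) : (noRuin u y k ↔ noRuin u y' k) := by
  unfold noRuin
  constructor <;> intro H n h1 h2
  · rw [← dR_congr h (by omega)]; exact H n h1 h2
  · rw [dR_congr h (by omega)]; exact H n h1 h2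

lemma ruinAt_congr {y y' : ℕ → ℕ} {m : ℕ} (h : ∀ i < m, y i = y' i) {u : ℤ} {s : ℕ}
    (hs : s ≤ m) : (ruinAt u y s ↔ ruinAt u y' s) := by
  unfold ruinAt
  rw [noRuin_congr h (by omega), dR_congr h hs]

lemma parisGe_congr {y y' : ℕ → ℕ} {m : ℕ} (h : ∀ i < m, y i = y' i) {u : ℤ} {ζ t : ℕ}
    (ht : t ≤ m + 1) : (parisGe u ζ t y ↔ parisGe u ζ t y') := by
  unfold parisGe
  constructor <;> intro H n hn hR
  · obtain ⟨s, hs, h1, h2⟩ := H n hn (by rwa [dR_congr h (by omega)])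
    exact ⟨s, hs, by rwa [← dR_congr h (by omega)], h2⟩
  · obtain ⟨s, hs, h1, h2⟩ := H n hn (by rwa [← dR_congr h (by omega)])
    exact ⟨s, hs, by rwa [dR_congr h (by omega)], h2⟩

lemma fpAt_congr {y y' : ℕ → ℕ} {m : ℕ} (h : ∀ i < m, y i = y' i) {z w : ℕ}
    (hw : w ≤ m) : (fpAt z w y ↔ fpAt z w y') := by
  unfold fpAt
  rw [dR_congr h hw]
  constructor <;> intro H <;> refine ⟨H.1, fun n hn => ?_⟩
  · rw [← dR_congr h (by omega)]; exact H.2 n hn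
  · rw [dR_congr h (by omega)]; exact H.2 n hn


section Translate
variable {Ω : Type*} [MeasureSpace Ω] (Y : ℕ → Ω → ℕ)

lemma riskProc_eq (u : ℤ) (n : ℕ) (ω : Ω) :
    riskProc Y u n ω = dR u (fun i => Y i ω) n := rfl

lemma aggClaims_eq (n : ℕ) (ω : Ω) : aggClaims Y n ω = dS (fun i => Y i ω) n := rfl

lemma le_sInf_image_iff (m : ℕ) (P : ℕ → Prop) :
    ((m : ℕ∞) ≤ sInf ((fun n : ℕ => (n : ℕ∞)) '' {n | P n})) ↔ ∀ n < m, ¬ P n := by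
  rw [le_sInf_iff]
  constructor
  · intro H n hn hP
    have := H (n : ℕ∞) ⟨n, hP, rfl⟩
    exact absurd (Nat.cast_le.mp this) (by omega)
  · rintro H b ⟨n, hP, rfl⟩
    by_contra hb
    push_neg at hb
    exact H n (Nat.cast_lt.mp hb) hP

lemma sInf_image_eq_iff (s : ℕ) (P : ℕ → Prop) :
    (sInf ((fun n : ℕ => (n : ℕ∞)) '' {n | P n}) = (s : ℕ∞)) ↔ P s ∧ ∀ n < s, ¬ P n := by
  constructor
  · intro h
    have h1 : ∀ n < s, ¬ P n := by
      rw [← le_sInf_image_iff]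
      exact le_of_eq h.symm
    refine ⟨?_, h1⟩
    by_contra hPs
    have h2 : ∀ n < s + 1, ¬ P n := by
      intro n hn
      rcases Nat.lt_succ_iff_lt_or_eq.mp hn with h | h
      · exact h1 n h
      · rw [h]; exact hPs
    have := (le_sInf_image_iff (s + 1) P).mpr h2
    rw [h] at this
    exact absurd (Nat.cast_le.mp this) (by omega)
  · rintro ⟨hPs, h1⟩
    refine le_antisymm (sInf_le ⟨s, hPs, rfl⟩) ?_
    exact (le_sInf_image_iff s P).mpr h1

lemma le_ruinTime_iff (u : ℤ) (m : ℕ) (ω : Ω) :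
    ((m : ℕ∞) ≤ ruinTime Y u ω) ↔ noRuin u (fun i => Y i ω) m := by
  unfold ruinTime
  rw [show {t : ℕ | 1 ≤ t ∧ riskProc Y u t ω ≤ 0} =
      {t : ℕ | (fun n => 1 ≤ n ∧ riskProc Y u n ω ≤ 0) t} from rfl]
  rw [le_sInf_image_iff]
  unfold noRuin
  constructor
  · intro H n h1 h2
    have := H n h2
    rw [riskProc_eq] at this
    push_neg at this
    exact this h1
  · intro H n hn hc
    have := H n hc.1 hn
    rw [riskProc_eq Y u n ω] at hc
    omega

lemma ruinTime_eq_iff (u : ℤ) (s : ℕ) (hs : 1 ≤ s) (ω : Ω) :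
    (ruinTime Y u ω = (s : ℕ∞)) ↔ ruinAt u (fun i => Y i ω) s := by
  unfold ruinTime
  rw [show {t : ℕ | 1 ≤ t ∧ riskProc Y u t ω ≤ 0} =
      {t : ℕ | (fun n => 1 ≤ n ∧ riskProc Y u n ω ≤ 0) t} from rfl]
  rw [sInf_image_eq_iff]
  unfold ruinAt noRuin
  rw [riskProc_eq]
  constructor
  · rintro ⟨⟨_, h2⟩, H⟩
    refine ⟨fun n h1 hn => ?_, h2⟩
    have := H n hn
    rw [riskProc_eq] at this
    push_neg at this
    exact this h1
  · rintro ⟨H, h2⟩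
    refine ⟨⟨hs, h2⟩, fun n hn hc => ?_⟩
    rw [riskProc_eq] at hc
    have := H n hc.1 hn
    omega

lemma le_parisian_iff (u : ℤ) (hu : 1 ≤ u) (ζ t : ℕ) (ω : Ω) :
    ((t : ℕ∞) ≤ parisian Y u ζ ω) ↔ parisGe u ζ t (fun i => Y i ω) := by
  unfold parisian
  rw [show {n : ℕ | ζ < n - lastUp Y u n ω ∧ riskProc Y u n ω ≤ 0} =
      {n : ℕ | (fun n => ζ < n - lastUp Y u n ω ∧ riskProc Y u n ω ≤ 0) n} from rfl]
  rw [le_sInf_image_iff]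
  have key : ∀ n : ℕ, (ζ < n - lastUp Y u n ω ∧ riskProc Y u n ω ≤ 0) ↔
      (riskProc Y u n ω ≤ 0 ∧ ¬ ∃ s < n, 0 < riskProc Y u s ω ∧ n ≤ s + ζ) := by
    intro n
    rcases Nat.eq_zero_or_pos n with h0 | hpos
    · subst h0
      have hR : ¬ riskProc Y u 0 ω ≤ 0 := by
        rw [riskProc_eq, dR_zero]; omega
      constructor
      · rintro ⟨_, h⟩; exact absurd h hR
      · rintro ⟨h, _⟩; exact absurd h hR
    · set L : Set ℕ := {s : ℕ | s < n ∧ 0 < riskProc Y u s ω} with hL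
      have h0L : 0 ∈ L := by
        constructor
        · omega
        · rw [riskProc_eq, dR_zero]; omega
      have hbdd : BddAbove L := ⟨n, fun x hx => le_of_lt hx.1⟩
      have hmem : sSup L ∈ L := Nat.sSup_mem ⟨0, h0L⟩ hbdd
      have hlt : sSup L < n := hmem.1
      have hiff : (¬ ζ < n - lastUp Y u n ω) ↔ ∃ s < n, 0 < riskProc Y u s ω ∧ n ≤ s + ζ := by
        unfold lastUp
        rw [← hL]
        constructor
        · intro h
          exact ⟨sSup L, hmem.1, hmem.2, by omega⟩
        · rintro ⟨s, hs1, hs2, hs3⟩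
          have hle : s ≤ sSup L := le_csSup hbdd ⟨hs1, hs2⟩
          omega
      constructor
      · rintro ⟨h1, h2⟩
        exact ⟨h2, fun hex => (hiff.mpr hex) h1⟩
      · rintro ⟨h1, h2⟩
        refine ⟨?_, h1⟩
        by_contra hc
        exact h2 (hiff.mp hc)
  unfold parisGe
  constructor
  · intro H n hn hR
    have := H n hn
    rw [key] at this
    push_neg at this
    obtain ⟨s, h1, h2, h3⟩ := this (by rwa [riskProc_eq])
    exact ⟨s, h1, by rwa [riskProc_eq] at h2, h3⟩
  · intro H n hn
    rw [key]
    rintro ⟨h1, h2⟩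
    obtain ⟨s, hs1, hs2, hs3⟩ := H n hn (by rwa [riskProc_eq] at h1)
    exact h2 ⟨s, hs1, by rwa [riskProc_eq], hs3⟩

end Translate


section Prob
variable {Ω : Type*} [MeasureSpace Ω] [IsProbabilityMeasure (ℙ : Measure Ω)]
variable (Y : ℕ → Ω → ℕ)

def pp (Y : ℕ → Ω → ℕ) (k : ℕ) : ℝ≥0∞ := ℙ {ω | Y 0 ω = k}

def ext {m : ℕ} (c : Fin m → ℕ) : ℕ → ℕ := fun i => if h : i < m then c ⟨i, h⟩ else 0

lemma ext_lt {m : ℕ} (c : Fin m → ℕ) {i : ℕ} (h : i < m) : ext c i = c ⟨i, h⟩ := dif_pos h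

variable (hY : ∀ i, Measurable (Y i))
  (hindep : iIndepFun Y ℙ)
  (hid : ∀ i, IdentDistrib (Y i) (Y 0) ℙ ℙ)

include hindep hid in
lemma atom (a m : ℕ) (c : Fin m → ℕ) :
    ℙ {ω | ∀ i : Fin m, Y (a + ↑i) ω = c i} = ∏ i : Fin m, pp Y (c i) := by
  classical
  set cc : ℕ → ℕ := fun j => ext c (j - a) with hcc
  set S : Finset ℕ := (Finset.range m).map ⟨fun i => a + i, fun x y h => by simpa using h⟩
    with hS
  have h1 := hindep.measure_inter_preimage_eq_mul (sets := fun j => ({cc j} : Set ℕ)) S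
    (fun j _ => measurableSet_singleton _)
  have hset : (⋂ j ∈ S, Y j ⁻¹' {cc j}) = {ω | ∀ i : Fin m, Y (a + ↑i) ω = c i} := by
    ext ω
    simp only [Set.mem_iInter, Set.mem_preimage, Set.mem_singleton_iff, Set.mem_setOf_eq, hS,
      Finset.mem_map, Finset.mem_range, Function.Embedding.coeFn_mk]
    constructor
    · intro H i
      have h2 := H (a + ↑i) ⟨↑i, i.isLt, rfl⟩
      rw [h2]
      show ext c (a + ↑i - a) = c i
      rw [show a + (i : ℕ) - a = (i : ℕ) by omega, ext_lt c i.isLt, Fin.eta]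
    · rintro H j ⟨i, him, rfl⟩
      show Y (a + i) ω = ext c (a + i - a)
      rw [show a + i - a = i by omega, ext_lt c him]
      exact H ⟨i, him⟩
  rw [hset] at h1
  rw [h1, hS, Finset.prod_map]
  show ∏ x ∈ Finset.range m, ℙ (Y (a + x) ⁻¹' {cc (a + x)}) = _
  rw [← Fin.prod_univ_eq_prod_range (fun i => ℙ (Y (a + i) ⁻¹' {cc (a + i)})) m]
  refine Finset.prod_congr rfl fun i _ => ?_
  rw [(hid (a + ↑i)).measure_mem_eq (measurableSet_singleton _)]
  have hcci : cc (a + ↑i) = c i := by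
    show ext c (a + ↑i - a) = c i
    rw [show a + (i : ℕ) - a = (i : ℕ) by omega, ext_lt c i.isLt, Fin.eta]
  rw [hcci]
  rfl

include hY hindep hid in
lemma prob_eq_tsum (a m : ℕ) (P : (Fin m → ℕ) → Prop) :
    ℙ {ω | P (fun i : Fin m => Y (a + ↑i) ω)} =
      ∑' c : Fin m → ℕ, ind (P c) * ∏ i, pp Y (c i) := by
  classical
  have huni : {ω | P (fun i : Fin m => Y (a + ↑i) ω)} =
      ⋃ c : {c : Fin m → ℕ // P c}, {ω | ∀ i : Fin m, Y (a + ↑i) ω = c.1 i} := by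
    ext ω
    simp only [Set.mem_setOf_eq, Set.mem_iUnion]
    constructor
    · intro h
      exact ⟨⟨_, h⟩, fun i => rfl⟩
    · rintro ⟨c, hc⟩
      have h4 : (fun i : Fin m => Y (a + ↑i) ω) = c.1 := funext hc
      rw [h4]
      exact c.2
  have hdisj : Pairwise (Function.onFun Disjoint
      (fun c : {c : Fin m → ℕ // P c} => {ω | ∀ i : Fin m, Y (a + ↑i) ω = c.1 i})) := by
    intro c c' hne
    simp only [Function.onFun]
    rw [Set.disjoint_left]
    intro ω h1 h2
    apply hne
    apply Subtype.ext
    funext i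
    rw [← h1 i, ← h2 i]
  have hmeas : ∀ c : {c : Fin m → ℕ // P c},
      MeasurableSet {ω | ∀ i : Fin m, Y (a + ↑i) ω = c.1 i} := by
    intro c
    have h6 : {ω | ∀ i : Fin m, Y (a + ↑i) ω = c.1 i} =
        ⋂ i : Fin m, (Y (a + ↑i)) ⁻¹' {c.1 i} := by
      ext ω
      simp [Set.mem_iInter, Set.mem_preimage]
    rw [h6]
    exact MeasurableSet.iInter fun i => (hY _) (measurableSet_singleton _)
  rw [huni, measure_iUnion hdisj hmeas]
  have h5 : ∀ c : {c : Fin m → ℕ // P c},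
      ℙ {ω | ∀ i : Fin m, Y (a + ↑i) ω = c.1 i} = ∏ i, pp Y (c.1 i) :=
    fun c => atom Y hindep hid a m c.1
  rw [tsum_congr h5]
  calc (∑' c : {c : Fin m → ℕ // P c}, ∏ i, pp Y (c.1 i))
      = ∑' c : Fin m → ℕ, Set.indicator {c : Fin m → ℕ | P c}
          (fun c => ∏ i, pp Y (c i)) c :=
        tsum_subtype {c : Fin m → ℕ | P c} (fun c => ∏ i, pp Y (c i))
    _ = ∑' c : Fin m → ℕ, ind (P c) * ∏ i, pp Y (c i) := by
        refine tsum_congr fun c => ?_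
        by_cases h : P c
        · rw [Set.indicator_of_mem (show c ∈ {c : Fin m → ℕ | P c} from h), ind_true h, one_mul]
        · rw [Set.indicator_of_notMem (show c ∉ {c : Fin m → ℕ | P c} from h), ind_false h,
            zero_mul]

include hY hindep hid in
lemma tsum_wt_one (m : ℕ) : (∑' c : Fin m → ℕ, ∏ i, pp Y (c i)) = 1 := by
  have h := prob_eq_tsum Y hY hindep hid 0 m (fun _ => True)
  simp only [ind_true trivial, one_mul, Set.setOf_true, measure_univ] at h
  exact h.symm

include hY hindep hid in
lemma prob_pred (a m : ℕ) (pred : (ℕ → ℕ) → Prop)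
    (hdep : ∀ y y' : ℕ → ℕ, (∀ i < m, y i = y' i) → (pred y ↔ pred y')) :
    ℙ {ω | pred (fun i => Y (a + i) ω)} =
      ∑' c : Fin m → ℕ, ind (pred (ext c)) * ∏ i, pp Y (c i) := by
  have h := prob_eq_tsum Y hY hindep hid a m (fun c => pred (ext c))
  rw [← h]
  congr 1
  ext ω
  simp only [Set.mem_setOf_eq]
  exact hdep _ _ (fun i hi => (ext_lt (fun j : Fin m => Y (a + ↑j) ω) hi).symm)

end Prob

section Split

def glueEquiv (a b : ℕ) : ((Fin a → ℕ) × (Fin b → ℕ)) ≃ (Fin (a + b) → ℕ) :=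
  (Equiv.sumArrowEquivProdArrow (Fin a) (Fin b) ℕ).symm.trans
    (Equiv.arrowCongr finSumFinEquiv (Equiv.refl ℕ))

lemma glueEquiv_left {a b : ℕ} (q : (Fin a → ℕ) × (Fin b → ℕ)) (i : Fin a) :
    glueEquiv a b q (Fin.castAdd b i) = q.1 i := by
  simp [glueEquiv, Equiv.sumArrowEquivProdArrow, Equiv.arrowCongr]

lemma glueEquiv_right {a b : ℕ} (q : (Fin a → ℕ) × (Fin b → ℕ)) (i : Fin b) :
    glueEquiv a b q (Fin.natAdd a i) = q.2 i := by
  simp [glueEquiv, Equiv.sumArrowEquivProdArrow, Equiv.arrowCongr]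

lemma ext_glue_lo {a b : ℕ} (q : (Fin a → ℕ) × (Fin b → ℕ)) {i : ℕ} (h : i < a) :
    ext (glueEquiv a b q) i = ext q.1 i := by
  rw [ext_lt _ (show i < a + b by omega), ext_lt _ h]
  have : (⟨i, show i < a + b by omega⟩ : Fin (a + b)) = Fin.castAdd b ⟨i, h⟩ := by
    apply Fin.ext; simp
  rw [this, glueEquiv_left]

lemma ext_glue_hi {a b : ℕ} (q : (Fin a → ℕ) × (Fin b → ℕ)) {i : ℕ} (h1 : a ≤ i)
    (h2 : i < a + b) : ext (glueEquiv a b q) i = ext q.2 (i - a) := by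
  rw [ext_lt _ h2, ext_lt _ (show i - a < b by omega)]
  have : (⟨i, h2⟩ : Fin (a + b)) = Fin.natAdd a ⟨i - a, by omega⟩ := by
    apply Fin.ext; simp; omega
  rw [this, glueEquiv_right]

lemma wt_glue (p : ℕ → ℝ≥0∞) {a b : ℕ} (q : (Fin a → ℕ) × (Fin b → ℕ)) :
    (∏ i, p (glueEquiv a b q i)) = (∏ i, p (q.1 i)) * ∏ i, p (q.2 i) := by
  rw [← Equiv.prod_comp finSumFinEquiv (fun i => p (glueEquiv a b q i))]
  rw [Fintype.prod_sum_type]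
  congr 1
  · exact Finset.prod_congr rfl fun i _ => by
      rw [finSumFinEquiv_apply_left, glueEquiv_left]
  · exact Finset.prod_congr rfl fun i _ => by
      rw [finSumFinEquiv_apply_right, glueEquiv_right]

lemma tsum_glue {a b : ℕ} (F : (Fin (a + b) → ℕ) → ℝ≥0∞) :
    ∑' c, F c = ∑' q : (Fin a → ℕ) × (Fin b → ℕ), F (glueEquiv a b q) :=
  ((glueEquiv a b).tsum_eq F).symm

lemma tsum_prod_mul {a b : ℕ} (f : (Fin a → ℕ) → ℝ≥0∞) (g : (Fin b → ℕ) → ℝ≥0∞) :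
    ∑' q : (Fin a → ℕ) × (Fin b → ℕ), f q.1 * g q.2 = (∑' x, f x) * ∑' y, g y := by
  rw [ENNReal.tsum_prod (f := fun x y => f x * g y)]
  calc ∑' x : Fin a → ℕ, ∑' y : Fin b → ℕ, f x * g y
      = ∑' x : Fin a → ℕ, f x * ∑' y : Fin b → ℕ, g y := by
        exact tsum_congr fun x => ENNReal.tsum_mul_left
    _ = (∑' x, f x) * ∑' y, g y := ENNReal.tsum_mul_right

end Split

section Decomp

def Epiece (u : ℤ) (ζ t s w z : ℕ) (y : ℕ → ℕ) : Prop :=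
  (ruinAt u y s ∧ dR u y s = -(z : ℤ)) ∧ fpAt z w (shf s y) ∧
    parisGe 1 ζ (t - w - s) (shf (s + w) y)

lemma decomp (u : ℤ) (hu : 1 ≤ u) (ζ t : ℕ) (hζ : 1 ≤ ζ) (ht : ζ + 2 ≤ t) (y : ℕ → ℕ) :
    parisGe u ζ t y ↔
      (noRuin u y (t - ζ) ∨
        ∃ s, (1 ≤ s ∧ s ≤ t - ζ - 1) ∧ ∃ w, (1 ≤ w ∧ w ≤ ζ) ∧ ∃ z, z < w ∧
          Epiece u ζ t s w z y) := by
  constructor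
  · intro hp
    by_cases hnr : noRuin u y (t - ζ)
    · exact Or.inl hnr
    right
    -- find the first ruin time s
    unfold noRuin at hnr
    push_neg at hnr
    obtain ⟨n₀, hn₀1, hn₀2, hn₀3⟩ := hnr
    set Q : Set ℕ := {n | 1 ≤ n ∧ dR u y n ≤ 0} with hQ
    have hQne : Q.Nonempty := ⟨n₀, hn₀1, by omega⟩
    set s := sInf Q with hs
    have hsmem : s ∈ Q := Nat.sInf_mem hQne
    have hs1 : 1 ≤ s := hsmem.1
    have hsR : dR u y s ≤ 0 := hsmem.2
    have hsmin : noRuin u y s := by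
      intro m h1 h2
      have hm : m ∉ Q := Nat.notMem_of_lt_sInf h2
      rw [hQ] at hm
      simp only [Set.mem_setOf_eq, not_and] at hm
      have := hm h1
      omega
    have hslt : s < t - ζ := lt_of_le_of_lt (Nat.sInf_le ⟨hn₀1, by omega⟩) hn₀2
    refine ⟨s, ⟨hs1, by omega⟩, ?_⟩
    -- z
    set z : ℕ := (-dR u y s).toNat with hzdef
    have hz : dR u y s = -(z : ℤ) := by
      have := Int.toNat_of_nonneg (show 0 ≤ -dR u y s by omega)
      omega
    -- recovery exists within ζ steps
    have hrec : ∃ i, (1 ≤ i ∧ 0 < dR u y (s + i)) ∧ i ≤ ζ := by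
      by_contra hcon
      push_neg at hcon
      have hneg : ∀ i ≤ ζ, dR u y (s + i) ≤ 0 := by
        intro i hi
        rcases Nat.eq_zero_or_pos i with h0 | h1
        · subst h0; simpa using hsR
        · by_contra hpos
          exact absurd hi (Nat.not_le.mpr (hcon i ⟨h1, by omega⟩))
      obtain ⟨s', hs'1, hs'2, hs'3⟩ := hp (s + ζ) (by omega) (hneg ζ le_rfl)
      have hges : s ≤ s' := by omega
      have := hneg (s' - s) (by omega)
      rw [show s + (s' - s) = s' by omega] at this
      omega
    obtain ⟨i₀, hi₀, hi₀ζ⟩ := hrec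
    set W : Set ℕ := {i | 1 ≤ i ∧ 0 < dR u y (s + i)} with hW
    have hWne : W.Nonempty := ⟨i₀, hi₀⟩
    set w := sInf W with hwdef
    have hwmem : w ∈ W := Nat.sInf_mem hWne
    have hw1 : 1 ≤ w := hwmem.1
    have hwζ : w ≤ ζ := le_trans (Nat.sInf_le hi₀) hi₀ζ
    have hwmin : ∀ j < w, dR u y (s + j) ≤ 0 := by
      intro j hj
      rcases Nat.eq_zero_or_pos j with h0 | h1
      · subst h0; simpa using hsR
      · have hm : j ∉ W := Nat.notMem_of_lt_sInf hj
        rw [hW] at hm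
        simp only [Set.mem_setOf_eq, not_and] at hm
        have := hm h1
        omega
    have hone : dR u y (s + w) = 1 := by
      have hk : s + w = (s + (w - 1)) + 1 := by omega
      have h1 := dR_succ u y (s + (w - 1))
      have h3 := hwmin (w - 1) (by omega)
      have h4 : (0 : ℤ) ≤ (y (s + (w - 1)) : ℤ) := Int.natCast_nonneg _
      have h5 : 0 < dR u y (s + w) := hwmem.2
      rw [hk] at h5 ⊢
      omega
    have hzw : z < w := by
      have := dR_le_add u y s w
      rw [hone, hz] at this
      omega
    refine ⟨w, ⟨hw1, hwζ⟩, z, hzw, ⟨⟨hsmin, hsR⟩, hz⟩, ?_, ?_⟩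
    · constructor
      · rw [← hz, ← dR_shf, hone]
      · intro j hj
        rw [← hz, ← dR_shf]
        exact hwmin j hj
    · intro i hi hRi
      have hIs : dR u y (s + w + i) ≤ 0 := by
        rw [dR_shf u y (s + w) i, hone]
        exact hRi
      rcases Nat.eq_zero_or_pos i with h0 | hi1
      · exfalso
        subst h0
        rw [dR_shf u y (s + w) 0, hone] at hIs
        rw [dR_zero] at hIs
        omega
      obtain ⟨s', hs'1, hs'2, hs'3⟩ := hp (s + w + i) (by omega) hIs
      rcases lt_or_ge s' s with hc1 | hc2
      · refine ⟨0, by omega, ?_, by omega⟩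
        rw [dR_zero]
        omega
      rcases lt_or_ge s' (s + w) with hc3 | hc4
      · exfalso
        have := hwmin (s' - s) (by omega)
        rw [show s + (s' - s) = s' by omega] at this
        omega
      · obtain ⟨s'', rfl⟩ : ∃ k, s' = s + w + k := ⟨s' - (s + w), by omega⟩
        refine ⟨s'', by omega, ?_, by omega⟩
        have h6 := hs'2
        rw [dR_shf u y (s + w) s'', hone] at h6
        exact h6
  · rintro (hnr | ⟨s, ⟨hs1, hs2⟩, w, ⟨hw1, hw2⟩, z, hzw, ⟨⟨hruin, hz⟩, hfp, hpar⟩⟩)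
    · intro n hn hRn
      have hnge : t - ζ ≤ n := by
        by_contra hc
        push_neg at hc
        rcases Nat.eq_zero_or_pos n with h0 | h1
        · subst h0; rw [dR_zero] at hRn; omega
        · have := hnr n h1 hc
          omega
      refine ⟨t - ζ - 1, by omega, ?_, by omega⟩
      exact hnr (t - ζ - 1) (by omega) (by omega)
    · have hpos : ∀ m < s, 0 < dR u y m := by
        intro m hm
        rcases Nat.eq_zero_or_pos m with h0 | h1
        · subst h0; rw [dR_zero]; omega
        · exact hruin.1 m h1 hm
      have hneg : ∀ j < w, dR u y (s + j) ≤ 0 := by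
        intro j hj
        rw [dR_shf u y s j, hz]
        exact hfp.2 j hj
      have hone : dR u y (s + w) = 1 := by
        rw [dR_shf u y s w, hz]
        exact hfp.1
      have hsuf : ∀ i, dR u y (s + w + i) = dR 1 (shf (s + w) y) i := by
        intro i
        rw [dR_shf u y (s + w) i, hone]
      intro n hn hRn
      rcases lt_or_ge n s with hc1 | hc2
      · exact absurd hRn (by have := hpos n hc1; omega)
      rcases lt_or_ge n (s + w) with hc3 | hc4
      · refine ⟨s - 1, by omega, hpos (s - 1) (by omega), by omega⟩
      rcases Nat.eq_or_lt_of_le hc4 with hc5 | hc6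
      · exact absurd hRn (by rw [hc5] at hone; omega)
      · obtain ⟨i, rfl⟩ : ∃ k, n = s + w + k := ⟨n - (s + w), by omega⟩
        have hi1 : 1 ≤ i := by omega
        have hi2 : i < t - w - s := by omega
        obtain ⟨s'', h1, h2, h3⟩ := hpar i hi2 (by rw [← hsuf]; exact hRn)
        refine ⟨s + w + s'', by omega, ?_, by omega⟩
        rw [hsuf]
        exact h2

lemma Epiece_ruin {u : ℤ} {ζ t s w z : ℕ} {y : ℕ → ℕ} (h : Epiece u ζ t s w z y) :
    dR u y s ≤ 0 := by
  rw [h.1.2]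
  omega

lemma Epiece_unique {u : ℤ} {ζ t s w z s' w' z' : ℕ} {y : ℕ → ℕ}
    (hs1 : 1 ≤ s) (hs1' : 1 ≤ s')
    (h : Epiece u ζ t s w z y) (h' : Epiece u ζ t s' w' z' y) :
    s = s' ∧ w = w' ∧ z = z' := by
  have hss : s = s' := by
    rcases lt_trichotomy s s' with hc | hc | hc
    · have := h'.1.1.1 s hs1 hc
      have := Epiece_ruin h
      omega
    · exact hc
    · have := h.1.1.1 s' hs1' hc
      have := Epiece_ruin h'
      omega
  subst hss
  have hzz : z = z' := by
    have h1 := h.1.2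
    have h2 := h'.1.2
    omega
  subst hzz
  have hww : w = w' := by
    rcases lt_trichotomy w w' with hc | hc | hc
    · have := h'.2.1.2 w hc
      have := h.2.1.1
      omega
    · exact hc
    · have := h.2.1.2 w' hc
      have := h'.2.1.1
      omega
  exact ⟨rfl, hww, rfl⟩

end Decomp

section Kendall

def runMax (g : ℕ → ℤ) : ℕ → ℤ
  | 0 => g 0
  | n + 1 => max (runMax g n) (g (n + 1))

lemma le_runMax (g : ℕ → ℤ) {k n : ℕ} (h : k ≤ n) : g k ≤ runMax g n := by
  induction n with
  | zero =>
    have : k = 0 := by omega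
    subst this
    exact le_of_eq rfl
  | succ n ih =>
    rcases Nat.lt_succ_iff_lt_or_eq.mp (Nat.lt_succ_of_le h) with h1 | h1
    · exact le_trans (ih (by omega)) (le_max_left _ _)
    · subst h1
      exact le_max_right _ _

lemma runMax_mem (g : ℕ → ℤ) (n : ℕ) : ∃ k ≤ n, runMax g n = g k := by
  induction n with
  | zero => exact ⟨0, le_rfl, rfl⟩
  | succ n ih =>
    obtain ⟨k, hk, hkeq⟩ := ih
    rcases le_or_gt (g (n + 1)) (runMax g n) with h | h
    · refine ⟨k, by omega, ?_⟩
      show max (runMax g n) (g (n + 1)) = g k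
      rw [max_eq_left h, hkeq]
    · refine ⟨n + 1, le_rfl, ?_⟩
      show max (runMax g n) (g (n + 1)) = g (n + 1)
      rw [max_eq_right (le_of_lt h)]

lemma runMax_step (g : ℕ → ℤ) (hstep : ∀ m, g (m + 1) ≤ g m + 1) (n : ℕ) :
    runMax g (n + 1) = runMax g n + (if runMax g n < g (n + 1) then 1 else 0) := by
  have hle : g n ≤ runMax g n := le_runMax g le_rfl
  have h1 := hstep n
  show max (runMax g n) (g (n + 1)) = _
  by_cases h : runMax g n < g (n + 1)
  · rw [max_eq_right (le_of_lt h), if_pos h]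
    omega
  · rw [max_eq_left (by omega), if_neg h]
    omega

lemma recordChar (g : ℕ → ℤ) (n : ℕ) :
    (∀ k < n + 1, g k < g (n + 1)) ↔ runMax g n < g (n + 1) := by
  constructor
  · intro h
    obtain ⟨k, hk, hkeq⟩ := runMax_mem g n
    rw [hkeq]
    exact h k (by omega)
  · intro h k hk
    exact lt_of_le_of_lt (le_runMax g (by omega)) h

def rotFn (j : ℕ) {w : ℕ} (y : Fin w → ℕ) : Fin w → ℕ :=
  fun i => y ⟨(j + i.val) % w, Nat.mod_lt _ i.pos⟩

lemma dS_ext_top {w : ℕ} (v : Fin w → ℕ) : dS (ext v) w = ∑ i : Fin w, v i := by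
  unfold dS
  rw [← Fin.sum_univ_eq_sum_range (fun i => ext v i) w]
  exact Finset.sum_congr rfl fun i _ => by rw [ext_lt v i.isLt]

lemma fp_sum {w z : ℕ} (hzw : z < w) {v : Fin w → ℕ} (h : fpAt z w (ext v)) :
    dS (ext v) w = w - (z + 1) := by
  have h1 := h.1
  unfold dR at h1
  omega

open Classical in
lemma cycle_count (w z : ℕ) (hw : 1 ≤ w) (hzw : z < w) (y : Fin w → ℕ)
    (hsum : ∑ i, y i = w - (z + 1)) :
    ((Finset.range w).filter (fun j => fpAt z w (ext (rotFn j y)))).card = z + 1 := by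
  set x : ℕ → ℕ := fun i => y ⟨i % w, Nat.mod_lt _ (by omega)⟩ with hxdef
  set g : ℕ → ℤ := fun n => (n : ℤ) - (dS x n : ℤ) with hgdef
  have hg0 : g 0 = 0 := by simp [hgdef, dS]
  have hgstep : ∀ n, g (n + 1) = g n + 1 - x n := by
    intro n
    simp only [hgdef]
    unfold dS
    rw [Finset.sum_range_succ]
    push_cast
    ring
  have hstep_le : ∀ n, g (n + 1) ≤ g n + 1 := by
    intro n
    have := hgstep n
    have h4 : (0 : ℤ) ≤ (x n : ℤ) := Int.natCast_nonneg _
    omega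
  have hx_per : ∀ i, x (i + w) = x i := by
    intro i
    simp only [hxdef]
    congr 1
    apply Fin.ext
    simp [Nat.add_mod_right]
  have hSx : dS x w = w - (z + 1) := by
    unfold dS
    rw [← Fin.sum_univ_eq_sum_range (fun i => x i) w, ← hsum]
    refine Finset.sum_congr rfl fun i _ => ?_
    simp only [hxdef]
    congr 1
    apply Fin.ext
    simp [Nat.mod_eq_of_lt i.isLt]
  have hgw : g w = z + 1 := by
    simp only [hgdef, hSx]
    have h : z + 1 ≤ w := by omega
    rw [Nat.cast_sub h]
    push_cast
    ring
  have hgper : ∀ n, g (n + w) = g n + (z + 1) := by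
    intro n
    induction n with
    | zero => simpa [hg0] using hgw
    | succ n ih =>
      have e : n + 1 + w = (n + w) + 1 := by omega
      rw [e, hgstep (n + w), ih, hx_per n, hgstep n]
      ring
  -- identification of good rotations with records
  have hdSrot : ∀ (j : ℕ) (n : ℕ), n ≤ w → dS (ext (rotFn j y)) n = dS (shf j x) n := by
    intro j n hn
    unfold dS
    refine Finset.sum_congr rfl fun i hi => ?_
    have hiw : i < w := lt_of_lt_of_le (Finset.mem_range.mp hi) hn
    rw [ext_lt _ hiw]
    rfl
  have hdRrot : ∀ (j n : ℕ), n ≤ w →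
      dR (-(z : ℤ)) (ext (rotFn j y)) n = -(z : ℤ) + (g (j + n) - g j) := by
    intro j n hn
    unfold dR
    rw [hdSrot j n hn]
    have hsplit : dS x (j + n) = dS x j + dS (shf j x) n := dS_add x j n
    simp only [hgdef]
    push_cast [hsplit]
    ring
  have hGoodIff : ∀ j < w, (fpAt z w (ext (rotFn j y)) ↔ runMax g (w - 1 + j) < g (j + w)) := by
    intro j hj
    have hiff1 : fpAt z w (ext (rotFn j y)) ↔ ∀ n < w, g (j + n) < g (j + w) := by
      unfold fpAt
      have hjw := hgper j
      constructor
      · intro ⟨h1, h2⟩ n hn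
        have h3 := h2 n hn
        rw [hdRrot j n (by omega)] at h3
        omega
      · intro h
        refine ⟨?_, ?_⟩
        · rw [hdRrot j w le_rfl]
          omega
        · intro n hn
          rw [hdRrot j n (by omega)]
          have := h n hn
          omega
    have hiff2 : (∀ n < w, g (j + n) < g (j + w)) ↔ ∀ k < j + w, g k < g (j + w) := by
      constructor
      · intro h k hk
        rcases le_or_gt j k with hc | hc
        · have := h (k - j) (by omega)
          rw [show j + (k - j) = k from by omega] at this
          exact this
        · have h1 := h (k + w - j) (by omega)
          rw [show j + (k + w - j) = k + w from by omega] at h1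
          have h2 := hgper k
          omega
      · intro h n hn
        exact h (j + n) (by omega)
    have hiff3 : (∀ k < j + w, g k < g (j + w)) ↔ runMax g (w - 1 + j) < g (j + w) := by
      have e : j + w = (w - 1 + j) + 1 := by omega
      rw [e]
      exact recordChar g (w - 1 + j)
    rw [hiff1, hiff2, hiff3]
  -- telescoping count
  have hMper : runMax g (w - 1 + w) = runMax g (w - 1) + (z + 1) := by
    refine le_antisymm ?_ ?_
    · obtain ⟨k, hk, hkeq⟩ := runMax_mem g (w - 1 + w)
      rcases le_or_gt k (w - 1) with hc | hc
      · have := le_runMax g (le_refl (w - 1))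
        have h2 := le_runMax g hc (n := w - 1)
        omega
      · have h3 := hgper (k - w)
        rw [show k - w + w = k from by omega] at h3
        have h4 := le_runMax g (show k - w ≤ w - 1 from by omega) (n := w - 1)
        omega
    · obtain ⟨k, hk, hkeq⟩ := runMax_mem g (w - 1)
      have h3 := hgper k
      have h4 := le_runMax g (show k + w ≤ w - 1 + w from by omega) (n := w - 1 + w)
      omega
  have hsum2 : ∑ j ∈ Finset.range w,
      (if fpAt z w (ext (rotFn j y)) then (1 : ℤ) else 0) = z + 1 := by
    have htel := Finset.sum_range_sub (fun i => runMax g (w - 1 + i)) w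
    have hper : ∀ j ∈ Finset.range w,
        (if fpAt z w (ext (rotFn j y)) then (1 : ℤ) else 0) =
          runMax g (w - 1 + (j + 1)) - runMax g (w - 1 + j) := by
      intro j hj
      have hjw := Finset.mem_range.mp hj
      have hstep := runMax_step g hstep_le (w - 1 + j)
      have e : (w - 1 + j) + 1 = w - 1 + (j + 1) := by omega
      have e2 : (w - 1 + j) + 1 = j + w := by omega
      rw [e] at hstep
      rw [hstep]
      rw [show g (w - 1 + (j + 1)) = g (j + w) from by rw [← e, e2]]
      have := hGoodIff j hjw
      by_cases hgood : fpAt z w (ext (rotFn j y))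
      · rw [if_pos hgood, if_pos (this.mp hgood)]
        ring
      · rw [if_neg hgood, if_neg (fun hc => hgood (this.mpr hc))]
        ring
    rw [Finset.sum_congr rfl hper, htel, hMper]
    simp only [Nat.add_zero]
    omega
  have hbool : (∑ j ∈ Finset.range w, if fpAt z w (ext (rotFn j y)) then (1 : ℤ) else 0) =
      (((Finset.range w).filter (fun j => fpAt z w (ext (rotFn j y)))).card : ℤ) :=
    Finset.sum_boole _ _
  rw [hsum2] at hbool
  exact_mod_cast hbool.symm

lemma kendall (p : ℕ → ℝ≥0∞) (w z : ℕ) (hw : 1 ≤ w) (hzw : z < w) :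
    ∑' c : Fin w → ℕ, ind (fpAt z w (ext c)) * ∏ i, p (c i) =
      ((z + 1 : ℕ) : ℝ≥0∞) / (w : ℝ≥0∞) *
        ∑' c : Fin w → ℕ, ind (dS (ext c) w = w - (z + 1)) * ∏ i, p (c i) := by
  classical
  haveI : NeZero w := ⟨by omega⟩
  set σ : ℕ → (Fin w ≃ Fin w) := fun j => Equiv.addLeft (Fin.ofNat w j) with hσ
  have hrot : ∀ (j : ℕ) (c : Fin w → ℕ) (i : Fin w), rotFn j c i = c (σ j i) := by
    intro j c i
    show c ⟨(j + i.val) % w, _⟩ = c (σ j i)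
    congr 1
    apply Fin.ext
    show (j + ↑i) % w = (Fin.ofNat w j + i).val
    rw [Fin.val_add, Fin.val_ofNat, Nat.mod_add_mod]
  set B := ∑' c : Fin w → ℕ, ind (fpAt z w (ext c)) * ∏ i, p (c i) with hB
  set X := ∑' c : Fin w → ℕ, ind (dS (ext c) w = w - (z + 1)) * ∏ i, p (c i) with hX
  have key : ((z + 1 : ℕ) : ℝ≥0∞) * X = (w : ℝ≥0∞) * B := by
    have h1 : ∀ c : Fin w → ℕ, ((z + 1 : ℕ) : ℝ≥0∞) * ind (dS (ext c) w = w - (z + 1)) =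
        ∑ j ∈ Finset.range w, ind (fpAt z w (ext (rotFn j c))) := by
      intro c
      by_cases hc : dS (ext c) w = w - (z + 1)
      · rw [ind_true hc, mul_one]
        have hcc : ∑ i, c i = w - (z + 1) := by rw [← dS_ext_top c]; exact hc
        have hcard := cycle_count w z hw hzw c hcc
        have : ∑ j ∈ Finset.range w, ind (fpAt z w (ext (rotFn j c))) =
            (((Finset.range w).filter (fun j => fpAt z w (ext (rotFn j c)))).card : ℝ≥0∞) := by
          rw [← Finset.sum_boole]
          refine Finset.sum_congr rfl fun j _ => ?_
          by_cases h : fpAt z w (ext (rotFn j c))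
          · rw [ind_true h, if_pos h]
          · rw [ind_false h, if_neg h]
        rw [this, hcard]
      · rw [ind_false hc, mul_zero]
        refine (Finset.sum_eq_zero fun j _ => ?_).symm
        refine ind_false fun hfp => hc ?_
        have h2 := fp_sum hzw hfp
        rw [dS_ext_top] at h2
        have h3 : ∑ i, rotFn j c i = ∑ i, c i := by
          rw [Finset.sum_congr rfl fun i _ => hrot j c i]
          exact Equiv.sum_comp (σ j) c
        rw [dS_ext_top, ← h3]
        exact h2
    calc ((z + 1 : ℕ) : ℝ≥0∞) * X
        = ∑' c : Fin w → ℕ, (((z + 1 : ℕ) : ℝ≥0∞) * ind (dS (ext c) w = w - (z + 1))) *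
            ∏ i, p (c i) := by
          rw [hX, ← ENNReal.tsum_mul_left]
          exact tsum_congr fun c => by ring
      _ = ∑' c : Fin w → ℕ, ∑ j ∈ Finset.range w,
            ind (fpAt z w (ext (rotFn j c))) * ∏ i, p (c i) := by
          refine tsum_congr fun c => ?_
          rw [h1 c, Finset.sum_mul]
      _ = ∑ j ∈ Finset.range w, ∑' c : Fin w → ℕ,
            ind (fpAt z w (ext (rotFn j c))) * ∏ i, p (c i) :=
          Summable.tsum_finsetSum fun j _ => ENNReal.summable
      _ = ∑ j ∈ Finset.range w, B := by
          refine Finset.sum_congr rfl fun j _ => ?_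
          have hE : ∀ c : Fin w → ℕ, rotFn j c = fun i => c (σ j i) :=
            fun c => funext (hrot j c)
          have hwt : ∀ c : Fin w → ℕ, (∏ i, p (c (σ j i))) = ∏ i, p (c i) :=
            fun c => Equiv.prod_comp (σ j) (fun i => p (c i))
          set E : (Fin w → ℕ) ≃ (Fin w → ℕ) := Equiv.arrowCongr (σ j).symm (Equiv.refl ℕ)
            with hEdef
          have hEapp : ∀ c : Fin w → ℕ, E c = fun i => c (σ j i) := by
            intro c
            funext i
            simp [hEdef, Equiv.arrowCongr]
          calc ∑' c : Fin w → ℕ, ind (fpAt z w (ext (rotFn j c))) * ∏ i, p (c i)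
              = ∑' c : Fin w → ℕ, ind (fpAt z w (ext (E c))) * ∏ i, p (E c i) := by
                refine tsum_congr fun c => ?_
                rw [hEapp c, ← hE c]
                congr 1
                rw [hE c]
                exact (hwt c).symm
            _ = B := by
                rw [hB]
                exact E.tsum_eq (fun v => ind (fpAt z w (ext v)) * ∏ i, p (v i))
      _ = (w : ℝ≥0∞) * B := by
          rw [Finset.sum_const, Finset.card_range, nsmul_eq_mul]
  have hw0 : (w : ℝ≥0∞) ≠ 0 := by
    simp only [ne_eq, Nat.cast_eq_zero]
    omega
  have hwtop : (w : ℝ≥0∞) ≠ ⊤ := ENNReal.natCast_ne_top w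
  calc B = (w : ℝ≥0∞)⁻¹ * ((w : ℝ≥0∞) * B) := by
        rw [← mul_assoc, ENNReal.inv_mul_cancel hw0 hwtop, one_mul]
    _ = (w : ℝ≥0∞)⁻¹ * (((z + 1 : ℕ) : ℝ≥0∞) * X) := by rw [key]
    _ = ((z + 1 : ℕ) : ℝ≥0∞) / (w : ℝ≥0∞) * X := by
        rw [div_eq_mul_inv]
        ring

end Kendall

section Assembly

lemma ind_decomp (u : ℤ) (hu : 1 ≤ u) (ζ t : ℕ) (hζ : 1 ≤ ζ) (ht : ζ + 2 ≤ t) (y : ℕ → ℕ) :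
    ind (parisGe u ζ t y) = ind (noRuin u y (t - ζ)) +
      ∑ s ∈ Finset.Icc 1 (t - ζ - 1), ∑ w ∈ Finset.Icc 1 ζ, ∑ z ∈ Finset.range w,
        ind (Epiece u ζ t s w z y) := by
  by_cases hp : parisGe u ζ t y
  · rw [ind_true hp]
    rcases (decomp u hu ζ t hζ ht y).mp hp with hnr | ⟨s₀, hs₀b, w₀, hw₀b, z₀, hz₀b, hE₀⟩
    · rw [ind_true hnr]
      have hz : ∀ s ∈ Finset.Icc 1 (t - ζ - 1),
          (∑ w ∈ Finset.Icc 1 ζ, ∑ z ∈ Finset.range w, ind (Epiece u ζ t s w z y)) = 0 := by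
        intro s hs
        refine Finset.sum_eq_zero fun w _ => Finset.sum_eq_zero fun z _ => ind_false fun hE => ?_
        rw [Finset.mem_Icc] at hs
        have h1 := hnr s hs.1 (by omega)
        have h2 := Epiece_ruin hE
        omega
      rw [Finset.sum_eq_zero hz, add_zero]
    · have hnr : ¬ noRuin u y (t - ζ) := by
        intro hnr
        have h1 := hnr s₀ hs₀b.1 (by omega)
        have h2 := Epiece_ruin hE₀
        omega
      rw [ind_false hnr, zero_add]
      have hs₀mem : s₀ ∈ Finset.Icc 1 (t - ζ - 1) := Finset.mem_Icc.mpr hs₀b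
      have hw₀mem : w₀ ∈ Finset.Icc 1 ζ := Finset.mem_Icc.mpr hw₀b
      have hz₀mem : z₀ ∈ Finset.range w₀ := Finset.mem_range.mpr hz₀b
      have huniq : ∀ s ∈ Finset.Icc 1 (t - ζ - 1), ∀ w z : ℕ,
          ¬(s = s₀ ∧ w = w₀ ∧ z = z₀) → ind (Epiece u ζ t s w z y) = 0 := by
        intro s hs w z hne
        refine ind_false fun hE => hne ?_
        exact Epiece_unique (Finset.mem_Icc.mp hs).1 hs₀b.1 hE hE₀
      have e1 : ∑ s ∈ Finset.Icc 1 (t - ζ - 1), ∑ w ∈ Finset.Icc 1 ζ, ∑ z ∈ Finset.range w,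
          ind (Epiece u ζ t s w z y)
          = ∑ w ∈ Finset.Icc 1 ζ, ∑ z ∈ Finset.range w, ind (Epiece u ζ t s₀ w z y) :=
        Finset.sum_eq_single_of_mem s₀ hs₀mem (fun s hs hne =>
          Finset.sum_eq_zero fun w _ => Finset.sum_eq_zero fun z _ =>
            huniq s hs w z (by tauto))
      have e2 : ∑ w ∈ Finset.Icc 1 ζ, ∑ z ∈ Finset.range w, ind (Epiece u ζ t s₀ w z y)
          = ∑ z ∈ Finset.range w₀, ind (Epiece u ζ t s₀ w₀ z y) :=
        Finset.sum_eq_single_of_mem w₀ hw₀mem (fun w _ hne =>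
          Finset.sum_eq_zero fun z _ => huniq s₀ hs₀mem w z (by tauto))
      have e3 : ∑ z ∈ Finset.range w₀, ind (Epiece u ζ t s₀ w₀ z y)
          = ind (Epiece u ζ t s₀ w₀ z₀ y) :=
        Finset.sum_eq_single_of_mem z₀ hz₀mem (fun z _ hne =>
          huniq s₀ hs₀mem w₀ z (by tauto))
      rw [e1, e2, e3, ind_true hE₀]
  · rw [ind_false hp,
      ind_false (fun hnr => hp ((decomp u hu ζ t hζ ht y).mpr (Or.inl hnr))), zero_add]
    refine (Finset.sum_eq_zero fun s hs => Finset.sum_eq_zero fun w hw =>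
      Finset.sum_eq_zero fun z hz => ind_false fun hE =>
        hp ((decomp u hu ζ t hζ ht y).mpr (Or.inr ⟨s, Finset.mem_Icc.mp hs, w,
          Finset.mem_Icc.mp hw, z, Finset.mem_range.mp hz, hE⟩))).symm

lemma tsum_dim (a a' : ℕ) (h : a = a') (pred : (ℕ → ℕ) → Prop) (p : ℕ → ℝ≥0∞) :
    (∑' c : Fin a → ℕ, ind (pred (ext c)) * ∏ i, p (c i))
      = ∑' c : Fin a' → ℕ, ind (pred (ext c)) * ∏ i, p (c i) := by
  subst h
  rfl

lemma epiece_term (p : ℕ → ℝ≥0∞) (u : ℤ) (ζ t s w z : ℕ) (hw1 : 1 ≤ w) (hsw : s + w + 1 ≤ t) :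
    (∑' c : Fin (s + (w + (t - 1 - s - w))) → ℕ,
        ind (Epiece u ζ t s w z (ext c)) * ∏ i, p (c i))
      = (∑' c : Fin s → ℕ, ind (ruinAt u (ext c) s ∧ dR u (ext c) s = -(z : ℤ)) * ∏ i, p (c i))
        * ((∑' c : Fin w → ℕ, ind (fpAt z w (ext c)) * ∏ i, p (c i))
          * (∑' c : Fin (t - 1 - s - w) → ℕ,
              ind (parisGe 1 ζ (t - w - s) (ext c)) * ∏ i, p (c i))) := by
  set cc := t - 1 - s - w with hccdef
  rw [tsum_glue]
  have key : ∀ q : (Fin s → ℕ) × (Fin (w + cc) → ℕ),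
      ind (Epiece u ζ t s w z (ext (glueEquiv s (w + cc) q))) * ∏ i, p (glueEquiv s (w + cc) q i)
      = (ind (ruinAt u (ext q.1) s ∧ dR u (ext q.1) s = -(z : ℤ)) * ∏ i, p (q.1 i))
        * (ind (fpAt z w (ext q.2) ∧ parisGe 1 ζ (t - w - s) (shf w (ext q.2)))
            * ∏ i, p (q.2 i)) := by
    intro q
    have hag1 : ∀ i < s, ext (glueEquiv s (w + cc) q) i = ext q.1 i := fun i hi => ext_glue_lo q hi
    have hag2 : ∀ i < w, shf s (ext (glueEquiv s (w + cc) q)) i = ext q.2 i := by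
      intro i hi
      show ext (glueEquiv s (w + cc) q) (s + i) = ext q.2 i
      rw [ext_glue_hi q (by omega) (by omega), show s + i - s = i from by omega]
    have hag3 : ∀ i < cc, shf (s + w) (ext (glueEquiv s (w + cc) q)) i = shf w (ext q.2) i := by
      intro i hi
      show ext (glueEquiv s (w + cc) q) (s + w + i) = ext q.2 (w + i)
      rw [ext_glue_hi q (by omega) (by omega), show s + w + i - s = w + i from by omega]
    have hEiff : Epiece u ζ t s w z (ext (glueEquiv s (w + cc) q)) ↔
        ((ruinAt u (ext q.1) s ∧ dR u (ext q.1) s = -(z : ℤ)) ∧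
          (fpAt z w (ext q.2) ∧ parisGe 1 ζ (t - w - s) (shf w (ext q.2)))) := by
      unfold Epiece
      constructor
      · rintro ⟨⟨h1, h2⟩, h3, h4⟩
        exact ⟨⟨(ruinAt_congr hag1 le_rfl).mp h1, by rw [← dR_congr hag1 le_rfl]; exact h2⟩,
          (fpAt_congr hag2 le_rfl).mp h3, (parisGe_congr hag3 (by omega)).mp h4⟩
      · rintro ⟨⟨h1, h2⟩, h3, h4⟩
        exact ⟨⟨(ruinAt_congr hag1 le_rfl).mpr h1, by rw [dR_congr hag1 le_rfl]; exact h2⟩,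
          (fpAt_congr hag2 le_rfl).mpr h3, (parisGe_congr hag3 (by omega)).mpr h4⟩
    rw [wt_glue, ind_congr hEiff, ← ind_mul_ind]
    ring
  rw [tsum_congr key]
  rw [tsum_prod_mul
    (fun c => ind (ruinAt u (ext c) s ∧ dR u (ext c) s = -(z : ℤ)) * ∏ i, p (c i))
    (fun c => ind (fpAt z w (ext c) ∧ parisGe 1 ζ (t - w - s) (shf w (ext c))) * ∏ i, p (c i))]
  congr 1
  rw [tsum_glue]
  have key2 : ∀ q : (Fin w → ℕ) × (Fin cc → ℕ),
      ind (fpAt z w (ext (glueEquiv w cc q)) ∧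
          parisGe 1 ζ (t - w - s) (shf w (ext (glueEquiv w cc q)))) * ∏ i, p (glueEquiv w cc q i)
      = (ind (fpAt z w (ext q.1)) * ∏ i, p (q.1 i))
        * (ind (parisGe 1 ζ (t - w - s) (ext q.2)) * ∏ i, p (q.2 i)) := by
    intro q
    have hag1 : ∀ i < w, ext (glueEquiv w cc q) i = ext q.1 i := fun i hi => ext_glue_lo q hi
    have hag2 : ∀ i < cc, shf w (ext (glueEquiv w cc q)) i = ext q.2 i := by
      intro i hi
      show ext (glueEquiv w cc q) (w + i) = ext q.2 i
      rw [ext_glue_hi q (by omega) (by omega), show w + i - w = i from by omega]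
    have hiff : (fpAt z w (ext (glueEquiv w cc q)) ∧
        parisGe 1 ζ (t - w - s) (shf w (ext (glueEquiv w cc q))))
        ↔ (fpAt z w (ext q.1) ∧ parisGe 1 ζ (t - w - s) (ext q.2)) :=
      and_congr (fpAt_congr hag1 le_rfl) (parisGe_congr hag2 (by omega))
    rw [wt_glue, ind_congr hiff, ← ind_mul_ind]
    ring
  rw [tsum_congr key2]
  exact tsum_prod_mul (fun c => ind (fpAt z w (ext c)) * ∏ i, p (c i))
    (fun c => ind (parisGe 1 ζ (t - w - s) (ext c)) * ∏ i, p (c i))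

section ProbAsm
variable {Ω : Type*} [MeasureSpace Ω] [IsProbabilityMeasure (ℙ : Measure Ω)]
variable (Y : ℕ → Ω → ℕ) (hY : ∀ i, Measurable (Y i))
  (hindep : iIndepFun Y ℙ)
  (hid : ∀ i, IdentDistrib (Y i) (Y 0) ℙ ℙ)

include hY hindep hid in
lemma tsum_drop (a b : ℕ) (pred : (ℕ → ℕ) → Prop)
    (hdep : ∀ y y' : ℕ → ℕ, (∀ i < a, y i = y' i) → (pred y ↔ pred y')) :
    (∑' c : Fin (a + b) → ℕ, ind (pred (ext c)) * ∏ i, pp Y (c i))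
      = ∑' c : Fin a → ℕ, ind (pred (ext c)) * ∏ i, pp Y (c i) := by
  rw [tsum_glue]
  have h1 : ∀ q : (Fin a → ℕ) × (Fin b → ℕ),
      ind (pred (ext (glueEquiv a b q))) * ∏ i, pp Y (glueEquiv a b q i)
      = (ind (pred (ext q.1)) * ∏ i, pp Y (q.1 i)) * ∏ i, pp Y (q.2 i) := by
    intro q
    rw [wt_glue, ind_congr (hdep _ _ fun i hi => ext_glue_lo q hi)]
    ring
  rw [tsum_congr h1,
    tsum_prod_mul (fun c => ind (pred (ext c)) * ∏ i, pp Y (c i)) (fun c => ∏ i, pp Y (c i)),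
    tsum_wt_one Y hY hindep hid b, mul_one]

end ProbAsm
end Assembly

end ParisAux

open ParisAux

/-- Recursive representation of the finite-time Parisian ruin probability, where the
first passage probability `P(τ_{z+1} = ω)` is given by Kendall's identity
`((z+1)/ω) p^{*ω}_{ω-z-1}`. -/
theorem parisian_finite_time_recursion
    [IsProbabilityMeasure (ℙ : Measure Ω)]
    (Y : ℕ → Ω → ℕ) (hY : ∀ i, Measurable (Y i))
    (hindep : iIndepFun Y ℙ)
    (hid : ∀ i, IdentDistrib (Y i) (Y 0) ℙ ℙ)
    (u : ℕ) (hu : 1 ≤ u) (ζ : ℕ) (hζ : 1 ≤ ζ) (t : ℕ) (ht : ζ + 2 ≤ t) :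
    ℙ {ω | (t : ℕ∞) ≤ parisian Y (u : ℤ) ζ ω} =
      ℙ {ω | ((t - ζ : ℕ) : ℕ∞) ≤ ruinTime Y (u : ℤ) ω} +
      ∑ s ∈ Finset.Icc 1 (t - ζ - 1), ∑ w ∈ Finset.Icc 1 ζ, ∑ z ∈ Finset.range w,
        ℙ {ω | ruinTime Y (u : ℤ) ω = (s : ℕ∞) ∧ riskProc Y (u : ℤ) s ω = -(z : ℤ)} *
        ((((z + 1 : ℕ)) : ℝ≥0∞) / (w : ℝ≥0∞) * ℙ {ω | aggClaims Y w ω = w - (z + 1)}) *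
        ℙ {ω | ((t - w - s : ℕ) : ℕ∞) ≤ parisian Y (1 : ℤ) ζ ω} := by
  classical
  have hu1 : (1 : ℤ) ≤ (u : ℤ) := by exact_mod_cast hu
  -- LHS as a weighted sum
  have hL : ℙ {ω | (t : ℕ∞) ≤ parisian Y (u : ℤ) ζ ω}
      = ∑' c : Fin (t - 1) → ℕ, ind (parisGe (u : ℤ) ζ t (ext c)) * ∏ i, pp Y (c i) := by
    have hset : {ω | (t : ℕ∞) ≤ parisian Y (u : ℤ) ζ ω}
        = {ω | (fun y => parisGe (u : ℤ) ζ t y) (fun i => Y (0 + i) ω)} := by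
      ext ω
      simp only [Set.mem_setOf_eq, zero_add]
      exact le_parisian_iff Y (u : ℤ) hu1 ζ t ω
    rw [hset]
    exact prob_pred Y hY hindep hid 0 (t - 1) _
      (fun y y' h => parisGe_congr (m := t - 1) h (by omega))
  -- split the LHS sum
  have hsplit : (∑' c : Fin (t - 1) → ℕ, ind (parisGe (u : ℤ) ζ t (ext c)) * ∏ i, pp Y (c i))
      = (∑' c : Fin (t - 1) → ℕ, ind (noRuin (u : ℤ) (ext c) (t - ζ)) * ∏ i, pp Y (c i))
        + ∑ s ∈ Finset.Icc 1 (t - ζ - 1), ∑ w ∈ Finset.Icc 1 ζ, ∑ z ∈ Finset.range w,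
            ∑' c : Fin (t - 1) → ℕ,
              ind (Epiece (u : ℤ) ζ t s w z (ext c)) * ∏ i, pp Y (c i) := by
    have h1 : ∀ c : Fin (t - 1) → ℕ,
        ind (parisGe (u : ℤ) ζ t (ext c)) * ∏ i, pp Y (c i)
        = ind (noRuin (u : ℤ) (ext c) (t - ζ)) * ∏ i, pp Y (c i)
          + ∑ s ∈ Finset.Icc 1 (t - ζ - 1), ∑ w ∈ Finset.Icc 1 ζ, ∑ z ∈ Finset.range w,
              ind (Epiece (u : ℤ) ζ t s w z (ext c)) * ∏ i, pp Y (c i) := by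
      intro c
      rw [ind_decomp (u : ℤ) hu1 ζ t hζ ht (ext c), add_mul, Finset.sum_mul]
      congr 1
      refine Finset.sum_congr rfl fun s _ => ?_
      rw [Finset.sum_mul]
      refine Finset.sum_congr rfl fun w _ => ?_
      rw [Finset.sum_mul]
    rw [tsum_congr h1, ENNReal.tsum_add]
    congr 1
    rw [Summable.tsum_finsetSum (fun _ _ => ENNReal.summable)]
    refine Finset.sum_congr rfl fun s _ => ?_
    rw [Summable.tsum_finsetSum (fun _ _ => ENNReal.summable)]
    refine Finset.sum_congr rfl fun w _ => ?_
    rw [Summable.tsum_finsetSum (fun _ _ => ENNReal.summable)]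
  -- first term
  have hfirst : (∑' c : Fin (t - 1) → ℕ, ind (noRuin (u : ℤ) (ext c) (t - ζ)) * ∏ i, pp Y (c i))
      = ℙ {ω | ((t - ζ : ℕ) : ℕ∞) ≤ ruinTime Y (u : ℤ) ω} := by
    have hset : {ω | ((t - ζ : ℕ) : ℕ∞) ≤ ruinTime Y (u : ℤ) ω}
        = {ω | (fun y => noRuin (u : ℤ) y (t - ζ)) (fun i => Y (0 + i) ω)} := by
      ext ω
      simp only [Set.mem_setOf_eq, zero_add]
      exact le_ruinTime_iff Y (u : ℤ) (t - ζ) ω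
    calc (∑' c : Fin (t - 1) → ℕ, ind (noRuin (u : ℤ) (ext c) (t - ζ)) * ∏ i, pp Y (c i))
        = ∑' c : Fin ((t - ζ - 1) + ζ) → ℕ,
            ind (noRuin (u : ℤ) (ext c) (t - ζ)) * ∏ i, pp Y (c i) :=
          tsum_dim (t - 1) ((t - ζ - 1) + ζ) (by omega) (fun y => noRuin (u : ℤ) y (t - ζ)) (pp Y)
      _ = ∑' c : Fin (t - ζ - 1) → ℕ,
            ind (noRuin (u : ℤ) (ext c) (t - ζ)) * ∏ i, pp Y (c i) :=
          tsum_drop Y hY hindep hid (t - ζ - 1) ζ _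
            (fun y y' h => noRuin_congr (m := t - ζ - 1) h (by omega))
      _ = ℙ {ω | (fun y => noRuin (u : ℤ) y (t - ζ)) (fun i => Y (0 + i) ω)} :=
          (prob_pred Y hY hindep hid 0 (t - ζ - 1) _
            (fun y y' h => noRuin_congr (m := t - ζ - 1) h (by omega))).symm
      _ = ℙ {ω | ((t - ζ : ℕ) : ℕ∞) ≤ ruinTime Y (u : ℤ) ω} := by rw [← hset]
  rw [hL, hsplit, hfirst]
  congr 1
  refine Finset.sum_congr rfl fun s hs => Finset.sum_congr rfl fun w hw =>
    Finset.sum_congr rfl fun z hz => ?_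
  obtain ⟨hs1, hs2⟩ := Finset.mem_Icc.mp hs
  obtain ⟨hw1, hw2⟩ := Finset.mem_Icc.mp hw
  have hzw := Finset.mem_range.mp hz
  have hA : ℙ {ω | ruinTime Y (u : ℤ) ω = (s : ℕ∞) ∧ riskProc Y (u : ℤ) s ω = -(z : ℤ)}
      = ∑' c : Fin s → ℕ,
          ind (ruinAt (u : ℤ) (ext c) s ∧ dR (u : ℤ) (ext c) s = -(z : ℤ)) * ∏ i, pp Y (c i) := by
    have hset : {ω | ruinTime Y (u : ℤ) ω = (s : ℕ∞) ∧ riskProc Y (u : ℤ) s ω = -(z : ℤ)}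
        = {ω | (fun y => ruinAt (u : ℤ) y s ∧ dR (u : ℤ) y s = -(z : ℤ))
            (fun i => Y (0 + i) ω)} := by
      ext ω
      simp only [Set.mem_setOf_eq, zero_add]
      rw [ruinTime_eq_iff Y (u : ℤ) s hs1 ω, riskProc_eq]
    rw [hset]
    exact prob_pred Y hY hindep hid 0 s
      (fun y => ruinAt (u : ℤ) y s ∧ dR (u : ℤ) y s = -(z : ℤ))
      (fun y y' h => and_congr (ruinAt_congr h le_rfl) (by rw [dR_congr h le_rfl]))
  have hX : ℙ {ω | aggClaims Y w ω = w - (z + 1)}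
      = ∑' c : Fin w → ℕ, ind (dS (ext c) w = w - (z + 1)) * ∏ i, pp Y (c i) := by
    have hset : {ω | aggClaims Y w ω = w - (z + 1)}
        = {ω | (fun y => dS y w = w - (z + 1)) (fun i => Y (0 + i) ω)} := by
      ext ω
      simp only [Set.mem_setOf_eq, zero_add]
      rw [aggClaims_eq]
    rw [hset]
    exact prob_pred Y hY hindep hid 0 w (fun y => dS y w = w - (z + 1))
      (fun y y' h => by
        show dS y w = w - (z + 1) ↔ dS y' w = w - (z + 1)
        rw [dS_congr h le_rfl])
  have hC : ℙ {ω | ((t - w - s : ℕ) : ℕ∞) ≤ parisian Y (1 : ℤ) ζ ω}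
      = ∑' c : Fin (t - 1 - s - w) → ℕ,
          ind (parisGe 1 ζ (t - w - s) (ext c)) * ∏ i, pp Y (c i) := by
    have hset : {ω | ((t - w - s : ℕ) : ℕ∞) ≤ parisian Y (1 : ℤ) ζ ω}
        = {ω | (fun y => parisGe (1 : ℤ) ζ (t - w - s) y) (fun i => Y (0 + i) ω)} := by
      ext ω
      simp only [Set.mem_setOf_eq, zero_add]
      exact le_parisian_iff Y (1 : ℤ) le_rfl ζ (t - w - s) ω
    rw [hset, prob_pred Y hY hindep hid 0 (t - w - s - 1) _
      (fun y y' h => parisGe_congr (m := t - w - s - 1) h (by omega))]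
    exact tsum_dim (t - w - s - 1) (t - 1 - s - w) (by omega) (fun y => parisGe 1 ζ (t - w - s) y) (pp Y)
  calc (∑' c : Fin (t - 1) → ℕ, ind (Epiece (u : ℤ) ζ t s w z (ext c)) * ∏ i, pp Y (c i))
      = ∑' c : Fin (s + (w + (t - 1 - s - w))) → ℕ,
          ind (Epiece (u : ℤ) ζ t s w z (ext c)) * ∏ i, pp Y (c i) :=
        tsum_dim (t - 1) (s + (w + (t - 1 - s - w))) (by omega) (fun y => Epiece (u : ℤ) ζ t s w z y) (pp Y)
    _ = (∑' c : Fin s → ℕ,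
          ind (ruinAt (u : ℤ) (ext c) s ∧ dR (u : ℤ) (ext c) s = -(z : ℤ)) * ∏ i, pp Y (c i))
        * ((∑' c : Fin w → ℕ, ind (fpAt z w (ext c)) * ∏ i, pp Y (c i))
          * (∑' c : Fin (t - 1 - s - w) → ℕ,
              ind (parisGe 1 ζ (t - w - s) (ext c)) * ∏ i, pp Y (c i))) :=
        epiece_term (pp Y) (u : ℤ) ζ t s w z hw1 (by omega)
    _ = ℙ {ω | ruinTime Y (u : ℤ) ω = (s : ℕ∞) ∧ riskProc Y (u : ℤ) s ω = -(z : ℤ)} *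
        ((((z + 1 : ℕ)) : ℝ≥0∞) / (w : ℝ≥0∞) * ℙ {ω | aggClaims Y w ω = w - (z + 1)}) *
        ℙ {ω | ((t - w - s : ℕ) : ℕ∞) ≤ parisian Y (1 : ℤ) ζ ω} := by
      rw [kendall (pp Y) w z hw1 hzw, hA, hX, hC]
      ring

end
end
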